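/- arXiv:2003.08722 — 6 statements merged into one kernel-verified Lean document; each statement's English description precedes it below -/
import Mathlib

section
/- (Brauer's theorem) Let A be an n×n complex matrix whose characteristic polynomial equals ∏_{i=1}^n (X − λ_i), let v ∈ ℂⁿ be an eigenvector of A associated with the eigenvalue λ_k (i.e. A·v = λ_k·v), and let q ∈ ℂⁿ be any vector. Then the characteristic polynomial of the rank-one update A + v·qᵀ equals (X − (λ_k + qᵀv)) · ∏_{i≠k} (X − λ_i); that is, A + v·qᵀ has eigenvalues λ_1, …, λ_{k−1}, λ_k + vᵀq, λ_{k+1}, …, λ_n counted with algebraic multiplicity. -/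
open Polynomial Matrix Finset

lemma det_unique_aux {R : Type*} [CommRing R] {ι : Type*} [Unique ι]
    (M : Matrix ι ι R) : M.det = M default default :=
  Matrix.det_unique M

lemma one_apply_aux {R : Type*} [CommRing R] {ι : Type*} [Unique ι] :
    (1 : Matrix ι ι R) default default = 1 :=
  Matrix.one_apply_eq _

set_option maxHeartbeats 1000000 in
/-- **Brauer's theorem.** Adding the rank-one update `v qᵀ` to `A`, where `v` is an
eigenvector of `A` for the eigenvalue `λ_k`, moves the eigenvalue `λ_k` to
`λ_k + qᵀv` and leaves the other eigenvalues unchanged. -/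
theorem brauer (n : ℕ) (A : Matrix (Fin n) (Fin n) ℂ) (l : Fin n → ℂ)
    (hA : A.charpoly = ∏ i, (X - C (l i)))
    (k : Fin n) (v : Fin n → ℂ) (hv : v ≠ 0) (hAv : A.mulVec v = l k • v)
    (q : Fin n → ℂ) :
    (A + vecMulVec v q).charpoly =
      (X - C (l k + ∑ i, q i * v i)) * ∏ i ∈ univ.erase k, (X - C (l i)) := by
  classical
  set K := FractionRing (Polynomial ℂ) with hK
  let φ : Polynomial ℂ →+* K := algebraMap _ _
  have hφ : Function.Injective φ := IsFractionRing.injective _ _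
  apply hφ
  set ψ : ℂ →+* K := φ.comp C with hψ
  set t : K := φ X with ht
  -- each linear factor is nonzero in K
  have hfac : ∀ a : ℂ, t - ψ a ≠ 0 := by
    intro a h
    have h2 : φ (X - C a) = 0 := by
      rw [map_sub]; exact h
    exact X_sub_C_ne_zero a (hφ (h2.trans (map_zero φ).symm))
  set a : K := ψ (l k) with ha
  -- the mapped charmatrix
  set N : Matrix (Fin n) (Fin n) K := (charmatrix A).map φ with hN
  set u : Fin n → K := fun i => ψ (v i) with hu
  set w : Fin n → K := fun i => ψ (q i) with hw
  have hNdet : N.det = ∏ i, (t - ψ (l i)) := by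
    rw [hN, ← RingHom.mapMatrix_apply, ← RingHom.map_det]
    show φ A.charpoly = _
    rw [hA, map_prod]
    exact Finset.prod_congr rfl fun i _ => by rw [map_sub]; rfl
  have hNunit : IsUnit N.det := by
    rw [hNdet]
    exact (Finset.prod_ne_zero_iff.mpr fun i _ => hfac (l i)).isUnit
  -- N is t • 1 - A.map ψ
  have hNform : N = t • (1 : Matrix (Fin n) (Fin n) K) - A.map ψ := by
    ext i j
    by_cases hij : i = j
    · subst hij
      simp [hN, charmatrix_apply_eq, map_sub, Matrix.one_apply_eq, Matrix.map_apply,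
        hψ, RingHom.comp_apply, ht]
    · simp [hN, charmatrix_apply_ne _ _ _ hij, Matrix.one_apply_ne hij,
        Matrix.map_apply, hij, hψ, RingHom.comp_apply]
  -- eigenvector equation in K
  have hmapAv : (A.map ψ) *ᵥ u = ψ (l k) • u := by
    funext i
    have := congrArg ψ (congrFun hAv i)
    rw [RingHom.map_mulVec ψ A v i] at this
    simpa [hu, Function.comp_def] using this
  have hNv : N *ᵥ u = (t - a) • u := by
    rw [hNform, Matrix.sub_mulVec, Matrix.smul_mulVec, Matrix.one_mulVec, hmapAv,
      sub_smul, ha]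
  -- the inverse applied to the eigenvector
  have hNinv_v : N⁻¹ *ᵥ u = (t - a)⁻¹ • u := by
    have h1 : N⁻¹ *ᵥ (N *ᵥ u) = u := by
      rw [Matrix.mulVec_mulVec, Matrix.nonsing_inv_mul N hNunit, Matrix.one_mulVec]
    rw [hNv, Matrix.mulVec_smul] at h1
    have hta : t - a ≠ 0 := by rw [ha]; exact hfac (l k)
    calc N⁻¹ *ᵥ u = (t - a)⁻¹ • ((t - a) • (N⁻¹ *ᵥ u)) := by
          rw [smul_smul, inv_mul_cancel₀ hta, one_smul]
      _ = (t - a)⁻¹ • u := by rw [h1]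
  -- rewrite the mapped charmatrix of the rank-one update
  have hcm : (charmatrix (A + vecMulVec v q)).map φ
      = N + Matrix.replicateCol (Fin 1) (-u) * Matrix.replicateRow (Fin 1) w := by
    ext i j
    by_cases hij : i = j
    · subst hij
      simp [hN, charmatrix_apply_eq, map_sub, map_add, vecMulVec, Matrix.map_apply,
        Matrix.mul_apply, Matrix.replicateCol, Matrix.replicateRow, hu, hw, hψ, RingHom.comp_apply,
        sub_add_eq_sub_sub, sub_eq_sub_iff_sub_eq_sub]
      ring
    · simp [hN, charmatrix_apply_ne _ _ _ hij, map_add, map_neg, vecMulVec,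
        Matrix.map_apply, Matrix.mul_apply, Matrix.replicateCol, Matrix.replicateRow, hu, hw, hψ,
        RingHom.comp_apply]
      ring
  -- main computation
  have key : φ ((A + vecMulVec v q).charpoly)
      = N.det * (1 - (t - a)⁻¹ * (w ⬝ᵥ u)) := by
    show φ (charmatrix (A + vecMulVec v q)).det = _
    rw [RingHom.map_det, RingHom.mapMatrix_apply, hcm]
    erw [Matrix.det_add_replicateCol_mul_replicateRow (ι := Fin 1) hNunit]
    congr 1
    rw [det_unique_aux]
    have hcol : N⁻¹ * Matrix.replicateCol (Fin 1) (-u) = Matrix.replicateCol (Fin 1) (N⁻¹ *ᵥ (-u)) :=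
      (Matrix.replicateCol_mulVec _ _).symm
    rw [Matrix.mul_assoc, hcol]
    rw [Matrix.add_apply, one_apply_aux, Matrix.replicateRow_mul_replicateCol_apply]
    rw [Matrix.mulVec_neg, hNinv_v]
    rw [dotProduct_neg, dotProduct_smul, smul_eq_mul, ← sub_eq_add_neg]
  rw [key, hNdet, ← Finset.mul_prod_erase _ _ (Finset.mem_univ k)]
  have hwu : w ⬝ᵥ u = ψ (∑ i, q i * v i) := by
    rw [map_sum]
    exact Finset.sum_congr rfl fun i _ => (ψ.map_mul (q i) (v i)).symm
  have hta := hfac (l k)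
  rw [← ha] at hta
  rw [φ.map_mul, map_sub, map_prod]
  have hrhs2 : ∀ i ∈ univ.erase k, φ (X - C (l i)) = t - ψ (l i) := fun i _ => by
    rw [map_sub]; rfl
  rw [Finset.prod_congr rfl hrhs2]
  have : φ (C (l k + ∑ i, q i * v i)) = a + w ⬝ᵥ u := by
    rw [hwu, ha]
    show φ (C _) = ψ (l k) + ψ _
    rw [← map_add]; rfl
  rw [this, ← ha]
  have hinv : (t - a) * (t - a)⁻¹ = 1 := mul_inv_cancel₀ hta
  linear_combination (-(∏ i ∈ univ.erase k, (t - ψ (l i))) * (w ⬝ᵥ u)) * hinv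
end

section
/- If the list Λ = (λ_1, …, λ_n) of complex numbers is realizable, with λ_1 real and λ_1 ≥ |λ_i| for all i (λ_1 is the Perron eigenvalue), then for every ε ≥ 0 the list Λ_ε = (λ_1 + ε, λ_2, …, λ_n) is also realizable. -/
open Polynomial Matrix Finset Filter
open scoped ENNReal NNReal

namespace GuoAux

variable {m : Type*} [Fintype m] [DecidableEq m]

lemma charmatrix_map_eval {R : Type*} [CommRing R] (M : Matrix m m R) (z : R) :
    (charmatrix M).map (evalRingHom z) = z • (1 : Matrix m m R) - M := by
  ext i j
  by_cases h : i = j <;>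
    simp [h, charmatrix_apply, Matrix.one_apply, Matrix.smul_apply, Matrix.sub_apply,
      Matrix.diagonal_apply]

lemma charpoly_eval {R : Type*} [CommRing R] (M : Matrix m m R) (z : R) :
    M.charpoly.eval z = (z • (1 : Matrix m m R) - M).det := by
  have h1 : M.charpoly.eval z = ((charmatrix M).map (evalRingHom z)).det := by
    show evalRingHom z (charmatrix M).det = _
    rw [← RingHom.mapMatrix_apply, ← RingHom.map_det]
  rw [h1, charmatrix_map_eval]

lemma pow_card_dvd_det {R : Type*} [CommRing R] (M : Matrix m m R) (d : R)
    (h : ∀ i j, d ∣ M i j) : d ^ (Fintype.card m) ∣ M.det := by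
  rw [Matrix.det_apply]
  refine Finset.dvd_sum fun σ _ => ?_
  rw [Units.smul_def, zsmul_eq_mul]
  refine Dvd.dvd.mul_left ?_ _
  have he : d ^ (Fintype.card m) = ∏ i : m, d := by
    rw [Finset.prod_const, Finset.card_univ]
  rw [he]
  exact Finset.prod_dvd_prod_of_dvd _ _ fun i _ => h _ _

omit [DecidableEq m] in
lemma mul_nonneg_entries {A B : Matrix m m ℝ} (hA : ∀ i j, 0 ≤ A i j)
    (hB : ∀ i j, 0 ≤ B i j) : ∀ i j, 0 ≤ (A * B) i j := fun i j => by
  rw [Matrix.mul_apply]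
  exact Finset.sum_nonneg fun k _ => mul_nonneg (hA i k) (hB k j)

lemma pow_nonneg_entries {A : Matrix m m ℝ} (hA : ∀ i j, 0 ≤ A i j) (k : ℕ) :
    ∀ i j, 0 ≤ (A ^ k) i j := by
  induction k with
  | zero => intro i j; by_cases h : i = j <;> simp [h, Matrix.one_apply]
  | succ k ih => rw [pow_succ]; exact mul_nonneg_entries ih hA

/-- Positivity of the characteristic polynomial beyond all complex root moduli. -/
lemma eval_pos_of_roots_le {χ : ℝ[X]} (hmon : χ.Monic) (hdeg : 0 < χ.degree) {r : ℝ}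
    (hroot : ∀ z : ℂ, (χ.map Complex.ofRealHom).eval z = 0 → ‖z‖ ≤ r)
    {s : ℝ} (hs : r < s) : 0 < χ.eval s := by
  have hnoroot : ∀ t : ℝ, r < t → χ.eval t ≠ 0 := by
    intro t ht h0
    have h2 : (χ.map Complex.ofRealHom).eval ((Complex.ofRealHom : ℝ →+* ℂ) t) = 0 := by
      rw [Polynomial.eval_map, Polynomial.eval₂_at_apply, h0, map_zero]
    have habs := hroot _ h2
    rw [show (Complex.ofRealHom t : ℂ) = (t:ℂ) from rfl, Complex.norm_real, Real.norm_eq_abs] at habs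
    exact absurd (le_trans (le_abs_self t) habs) (not_le.2 ht)
  by_contra hle
  push_neg at hle
  have hlt : χ.eval s < 0 := lt_of_le_of_ne hle (hnoroot s hs)
  have htop := Polynomial.tendsto_atTop_of_leadingCoeff_nonneg χ hdeg
    (by rw [hmon.leadingCoeff]; exact zero_le_one)
  obtain ⟨t, ht⟩ := ((htop.eventually_ge_atTop 1).and (Filter.eventually_ge_atTop s)).exists
  have hcont : ContinuousOn (fun x => χ.eval x) (Set.Icc s t) :=
    (Polynomial.continuous χ).continuousOn
  have h0mem : (0 : ℝ) ∈ Set.Icc (χ.eval s) (χ.eval t) :=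
    ⟨le_of_lt hlt, le_trans zero_le_one ht.1⟩
  obtain ⟨c, hc, hc0⟩ := intermediate_value_Icc ht.2 hcont h0mem
  exact hnoroot c (lt_of_lt_of_le hs hc.1) hc0

end GuoAux

attribute [local instance] Matrix.linftyOpNormedRing Matrix.linftyOpNormedAlgebra

namespace GuoAux2

variable {n : ℕ}

lemma nnnorm_map_ofReal (M : Matrix (Fin n) (Fin n) ℝ) :
    ‖M.map (Complex.ofReal)‖₊ = ‖M‖₊ := by
  rw [Matrix.linfty_opNNNorm_def, Matrix.linfty_opNNNorm_def]
  congr 1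
  ext i
  congr 1
  ext j
  simp [Matrix.map_apply]

lemma adjugate_nonneg (hn : 0 < n) (A : Matrix (Fin n) (Fin n) ℝ)
    (hA : ∀ i j, 0 ≤ A i j) {r : ℝ} (hr : 0 ≤ r)
    (hroot : ∀ z : ℂ, ((A.charpoly).map Complex.ofRealHom).eval z = 0 → ‖z‖ ≤ r)
    {s : ℝ} (hs : r < s) :
    ∀ i j, 0 ≤ (adjugate (s • (1 : Matrix (Fin n) (Fin n) ℝ) - A)) i j := by
  haveI : Nonempty (Fin n) := ⟨⟨0, hn⟩⟩
  haveI : CompleteSpace (Matrix (Fin n) (Fin n) ℝ) := FiniteDimensional.complete ℝ _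
  haveI : CompleteSpace (Matrix (Fin n) (Fin n) ℂ) := FiniteDimensional.complete ℂ _
  have hs0 : 0 < s := lt_of_le_of_lt hr hs
  set Ac : Matrix (Fin n) (Fin n) ℂ := A.map Complex.ofReal with hAc
  -- spectral radius bound
  have hspec : spectralRadius ℂ Ac ≤ (r.toNNReal : ℝ≥0∞) := by
    rw [spectralRadius]
    refine iSup₂_le fun z hz => ?_
    have hz' : ¬IsUnit (algebraMap ℂ (Matrix (Fin n) (Fin n) ℂ) z - Ac) :=
      spectrum.mem_iff.mp hz
    have hch : Ac.charpoly.eval z = 0 := by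
      by_contra h0
      apply hz'
      rw [Matrix.isUnit_iff_isUnit_det, isUnit_iff_ne_zero]
      have : (z • (1 : Matrix (Fin n) (Fin n) ℂ) - Ac).det ≠ 0 := by
        rw [← GuoAux.charpoly_eval]; exact h0
      rwa [Algebra.algebraMap_eq_smul_one]
    have hchm : Ac.charpoly = (A.charpoly).map Complex.ofRealHom :=
      Matrix.charpoly_map A Complex.ofRealHom
    have habs : ‖z‖ ≤ r := hroot z (by rw [← hchm]; exact hch)
    rw [ENNReal.coe_le_coe, ← NNReal.coe_le_coe, coe_nnnorm, Real.coe_toNNReal _ hr]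
    exact habs
  have gelfand := spectrum.pow_nnnorm_pow_one_div_tendsto_nhds_spectralRadius Ac
  obtain ⟨s', hrs', hs's⟩ : ∃ s', r < s' ∧ s' < s := ⟨(r + s) / 2, by linarith, by linarith⟩
  have hs'0 : 0 < s' := lt_of_le_of_lt hr hrs'
  have hlt : spectralRadius ℂ Ac < (s'.toNNReal : ℝ≥0∞) := by
    refine lt_of_le_of_lt hspec ?_
    rw [ENNReal.coe_lt_coe]
    exact (Real.toNNReal_lt_toNNReal_iff hs'0).mpr hrs'
  have ev : ∀ᶠ k : ℕ in atTop, (‖Ac ^ k‖₊ : ℝ≥0∞) ^ (1/(k:ℝ)) < (s'.toNNReal : ℝ≥0∞) :=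
    gelfand.eventually_lt_const hlt
  -- norm equality
  have hmapk : ∀ k : ℕ, Ac ^ k = (A ^ k).map Complex.ofReal := by
    intro k
    have : Ac = (Complex.ofRealHom : ℝ →+* ℂ).mapMatrix A := rfl
    rw [this, ← map_pow]
    rfl
  have hnormk : ∀ k : ℕ, ‖Ac ^ k‖₊ = ‖A ^ k‖₊ := fun k => by
    rw [hmapk k, nnnorm_map_ofReal]
  -- eventually bound on norms
  have ev2 : ∀ᶠ k : ℕ in atTop, ‖A ^ k‖ ≤ s' ^ k := by
    filter_upwards [ev, eventually_ge_atTop 1] with k hk hk1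
    have hkR : (k : ℝ) ≠ 0 := Nat.cast_ne_zero.mpr (by omega)
    have h1 := ENNReal.rpow_le_rpow hk.le (Nat.cast_nonneg k : (0:ℝ) ≤ (k:ℝ))
    rw [← ENNReal.rpow_mul, one_div, inv_mul_cancel₀ hkR, ENNReal.rpow_one,
      ENNReal.rpow_natCast, ← ENNReal.coe_pow, ENNReal.coe_le_coe, hnormk] at h1
    calc ‖A ^ k‖ = ((‖A ^ k‖₊ : ℝ≥0) : ℝ) := rfl
    _ ≤ ((s'.toNNReal ^ k : ℝ≥0) : ℝ) := by exact_mod_cast h1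
    _ = s' ^ k := by rw [NNReal.coe_pow, Real.coe_toNNReal _ hs'0.le]
  -- the Neumann series
  set f : ℕ → Matrix (Fin n) (Fin n) ℝ := fun k => (s ^ (k+1))⁻¹ • A ^ k with hfdef
  have hnormf : ∀ k, ‖f k‖ = (s ^ (k+1))⁻¹ * ‖A ^ k‖ := by
    intro k
    rw [hfdef]
    simp only [norm_smul, Real.norm_eq_abs]
    rw [abs_of_pos (by positivity)]
  have hsum : Summable f := by
    refine Summable.of_norm_bounded_eventually (g := fun k => s⁻¹ * (s'/s) ^ k)
      (Summable.mul_left _ (summable_geometric_of_lt_one (by positivity)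
        ((div_lt_one hs0).mpr hs's))) ?_
    rw [Nat.cofinite_eq_atTop]
    filter_upwards [ev2] with k hk
    rw [hnormf]
    calc (s ^ (k+1))⁻¹ * ‖A ^ k‖ ≤ (s ^ (k+1))⁻¹ * s' ^ k := by
          exact mul_le_mul_of_nonneg_left hk (by positivity)
    _ = s⁻¹ * (s'/s) ^ k := by
          rw [div_pow]
          field_simp
          ring
  set T := ∑' k, f k with hT
  have hpartial : ∀ N : ℕ, (s • (1 : Matrix (Fin n) (Fin n) ℝ) - A) * (∑ k ∈ Finset.range N, f k)
      = 1 - (s ^ N)⁻¹ • A ^ N := by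
    intro N
    induction N with
    | zero => simp
    | succ N ih =>
      rw [Finset.sum_range_succ, mul_add, ih, hfdef]
      have hexp : (s • (1 : Matrix (Fin n) (Fin n) ℝ) - A) * ((s ^ (N+1))⁻¹ • A ^ N)
          = (s ^ N)⁻¹ • A ^ N - (s ^ (N+1))⁻¹ • A ^ (N+1) := by
        have h1 : s * ((s ^ N)⁻¹ * s⁻¹) = (s ^ N)⁻¹ := by field_simp
        rw [Matrix.sub_mul, Matrix.smul_mul, Matrix.one_mul, mul_smul_comm, smul_smul,
          pow_succ, mul_inv, h1, ← pow_succ']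
      rw [hexp]
      abel
  have htend0 : Tendsto (fun N : ℕ => (s ^ N)⁻¹ • A ^ N) atTop (nhds 0) := by
    have hb : ∀ᶠ (k:ℕ) in atTop, ‖(s ^ k)⁻¹ • A ^ k‖ ≤ (s'/s) ^ k := by
      filter_upwards [ev2] with k hk
      have he : ‖(s ^ k)⁻¹ • A ^ k‖ = (s ^ k)⁻¹ * ‖A ^ k‖ := by
        rw [norm_smul, Real.norm_eq_abs, abs_of_pos (by positivity)]
      rw [he, div_pow, div_eq_inv_mul]
      exact mul_le_mul_of_nonneg_left hk (by positivity)
    exact squeeze_zero_norm' hb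
      (tendsto_pow_atTop_nhds_zero_of_lt_one (by positivity) ((div_lt_one hs0).mpr hs's))
  have hMT : (s • (1 : Matrix (Fin n) (Fin n) ℝ) - A) * T = 1 := by
    have h1 : Tendsto (fun N : ℕ => (s • (1 : Matrix (Fin n) (Fin n) ℝ) - A)
        * (∑ k ∈ Finset.range N, f k)) atTop
        (nhds ((s • (1 : Matrix (Fin n) (Fin n) ℝ) - A) * T)) :=
      tendsto_const_nhds.mul hsum.hasSum.tendsto_sum_nat
    have h2 : Tendsto (fun N : ℕ => (s • (1 : Matrix (Fin n) (Fin n) ℝ) - A)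
        * (∑ k ∈ Finset.range N, f k)) atTop (nhds 1) := by
      simp only [hpartial]
      simpa using tendsto_const_nhds.sub htend0
    exact tendsto_nhds_unique h1 h2
  -- entries of T are nonnegative
  have hTnonneg : ∀ i j, 0 ≤ T i j := by
    intro i j
    have hentry : T i j = ∑' k, (f k) i j := by
      let φ : Matrix (Fin n) (Fin n) ℝ →ₗ[ℝ] ℝ :=
        { toFun := fun M => M i j
          map_add' := fun M N => rfl
          map_smul' := fun c M => rfl }
      have hφ := (LinearMap.toContinuousLinearMap φ).map_tsum hsum
      exact hφ
    rw [hentry]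
    refine tsum_nonneg fun k => ?_
    have : (f k) i j = (s ^ (k+1))⁻¹ * (A ^ k) i j := rfl
    rw [this]
    exact mul_nonneg (by positivity) (GuoAux.pow_nonneg_entries hA k i j)
  -- conclude
  have hdet : 0 < (s • (1 : Matrix (Fin n) (Fin n) ℝ) - A).det := by
    rw [← GuoAux.charpoly_eval]
    refine GuoAux.eval_pos_of_roots_le (A.charpoly_monic) ?_ hroot hs
    rw [Matrix.charpoly_degree_eq_dim, Fintype.card_fin]
    exact_mod_cast hn
  have hadj : adjugate (s • (1 : Matrix (Fin n) (Fin n) ℝ) - A)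
      = (s • (1 : Matrix (Fin n) (Fin n) ℝ) - A).det • T := by
    calc adjugate (s • (1 : Matrix (Fin n) (Fin n) ℝ) - A)
        = adjugate (s • (1 : Matrix (Fin n) (Fin n) ℝ) - A)
          * ((s • (1 : Matrix (Fin n) (Fin n) ℝ) - A) * T) := by rw [hMT, mul_one]
      _ = (adjugate (s • (1 : Matrix (Fin n) (Fin n) ℝ) - A)
          * (s • (1 : Matrix (Fin n) (Fin n) ℝ) - A)) * T := by rw [mul_assoc]
      _ = ((s • (1 : Matrix (Fin n) (Fin n) ℝ) - A).det • (1 : Matrix (Fin n) (Fin n) ℝ)) * T := by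
          rw [Matrix.adjugate_mul]
      _ = (s • (1 : Matrix (Fin n) (Fin n) ℝ) - A).det • T := by
          rw [Matrix.smul_mul, Matrix.one_mul]
  intro i j
  rw [hadj, Matrix.smul_apply]
  exact mul_nonneg hdet.le (hTnonneg i j)

end GuoAux2
namespace GuoAux3
open GuoAux GuoAux2

variable {n : ℕ}

lemma rootMultiplicity_pow {χ : ℝ[X]} (hχ : χ ≠ 0) (r : ℝ) (k : ℕ) :
    rootMultiplicity r (χ ^ k) = k * rootMultiplicity r χ := by
  induction k with
  | zero =>
    rw [pow_zero, ← Polynomial.C_1, Polynomial.rootMultiplicity_C]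
    simp
  | succ k ih =>
    rw [pow_succ, Polynomial.rootMultiplicity_mul (mul_ne_zero (pow_ne_zero _ hχ) hχ), ih]
    ring

lemma exists_nonneg_eigenvector (hn : 0 < n) (A : Matrix (Fin n) (Fin n) ℝ)
    (hA : ∀ i j, 0 ≤ A i j) {r : ℝ} (hr : 0 ≤ r)
    (hroot : ∀ z : ℂ, ((A.charpoly).map Complex.ofRealHom).eval z = 0 → ‖z‖ ≤ r)
    (h0 : A.charpoly.eval r = 0) :
    ∃ v : Fin n → ℝ, (∀ i, 0 ≤ v i) ∧ v ≠ 0 ∧ A *ᵥ v = r • v := by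
  haveI : Nonempty (Fin n) := ⟨⟨0, hn⟩⟩
  set χ : ℝ[X] := A.charpoly with hχdef
  have hχ0 : χ ≠ 0 := A.charpoly_monic.ne_zero
  set m : ℕ := rootMultiplicity r χ with hmdef
  have hm : 0 < m := (Polynomial.rootMultiplicity_pos hχ0).mpr h0
  set B : Matrix (Fin n) (Fin n) ℝ[X] := adjugate (charmatrix A) with hBdef
  have hBid : charmatrix A * B = χ • 1 := Matrix.mul_adjugate _
  -- not all entries of B are divisible by (X - C r) ^ m
  have hnotall : ¬ ∀ p : Fin n × Fin n, (X - C r) ^ m ∣ B p.1 p.2 := by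
    intro hall
    have hdvd : ((X - C r) ^ m) ^ (Fintype.card (Fin n)) ∣ B.det :=
      pow_card_dvd_det _ _ (fun i j => hall (i, j))
    rw [Matrix.det_adjugate, Fintype.card_fin, ← pow_mul] at hdvd
    have hpow0 : χ ^ (n - 1) ≠ 0 := pow_ne_zero _ hχ0
    have hle : m * n ≤ rootMultiplicity r (χ ^ (n - 1)) :=
      (Polynomial.le_rootMultiplicity_iff hpow0).mpr hdvd
    rw [rootMultiplicity_pow hχ0, ← hmdef] at hle
    have h1 : (n - 1) * m + m = n * m := by
      have : n - 1 + 1 = n := Nat.succ_pred_eq_of_pos hn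
      calc (n - 1) * m + m = (n - 1 + 1) * m := by ring
      _ = n * m := by rw [this]
    have : m * n ≤ n * m - m := by omega
    rw [mul_comm] at this
    omega
  -- the minimal multiplicity k
  set g : Fin n × Fin n → ℕ := fun p =>
    if B p.1 p.2 = 0 then m else rootMultiplicity r (B p.1 p.2) with hgdef
  set k : ℕ := univ.inf' univ_nonempty g with hkdef
  have hkdvd : ∀ i j, (X - C r) ^ k ∣ B i j := by
    intro i j
    by_cases hB0 : B i j = 0
    · rw [hB0]; exact dvd_zero _
    · have h1 : k ≤ rootMultiplicity r (B i j) := by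
        have h2 : k ≤ g (i, j) := Finset.inf'_le g (Finset.mem_univ (i, j))
        simpa only [hgdef, if_neg hB0] using h2
      exact (Polynomial.le_rootMultiplicity_iff hB0).mp h1
  obtain ⟨pst, hpst⟩ := not_forall.mp hnotall
  have hpst0 : B pst.1 pst.2 ≠ 0 := fun h => hpst (h ▸ dvd_zero _)
  have hpstlt : rootMultiplicity r (B pst.1 pst.2) < m := by
    by_contra hge
    exact hpst ((Polynomial.le_rootMultiplicity_iff hpst0).mp (not_lt.mp hge))
  have hkm : k < m := by
    refine lt_of_le_of_lt ?_ hpstlt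
    have h2 : k ≤ g pst := Finset.inf'_le g (Finset.mem_univ pst)
    simpa only [hgdef, if_neg hpst0] using h2
  obtain ⟨p0, _, hp0⟩ := Finset.exists_mem_eq_inf' (univ_nonempty) g
  have hp00 : B p0.1 p0.2 ≠ 0 := by
    intro h
    have h2 : k = m := by
      have h3 : k = g p0 := hp0
      rw [h3]
      simp only [hgdef]
      simp [h]
    omega
  have hrm0 : rootMultiplicity r (B p0.1 p0.2) = k := by
    have h2 : k = rootMultiplicity r (B p0.1 p0.2) := by
      have h3 : k = g p0 := hp0
      rw [h3]
      simp only [hgdef]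
      simp [hp00]
    omega
  have hndvd : ¬ (X - C r) ^ (k + 1) ∣ B p0.1 p0.2 := by
    intro h
    have := (Polynomial.le_rootMultiplicity_iff hp00).mpr h
    omega
  -- divide out (X - C r) ^ k
  have hmonic : ((X - C r : ℝ[X]) ^ k).Monic := (monic_X_sub_C r).pow k
  set Cm : Matrix (Fin n) (Fin n) ℝ[X] :=
    Matrix.of (fun i j => B i j /ₘ (X - C r) ^ k) with hCmdef
  have hCm : ∀ i j, (X - C r) ^ k * Cm i j = B i j := by
    intro i j
    have hmod : (B i j) %ₘ ((X - C r) ^ k) = 0 :=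
      (Polynomial.modByMonic_eq_zero_iff_dvd hmonic).mpr (hkdvd i j)
    have := Polynomial.modByMonic_add_div (B i j) ((X - C r) ^ k)
    rw [hmod, zero_add] at this
    exact this
  set qt : ℝ[X] := χ /ₘ (X - C r) ^ k with hqtdef
  have hqt : (X - C r) ^ k * qt = χ := by
    have hdvd : (X - C r) ^ k ∣ χ := (Polynomial.le_rootMultiplicity_iff hχ0).mp hkm.le
    have hmod : χ %ₘ ((X - C r) ^ k) = 0 :=
      (Polynomial.modByMonic_eq_zero_iff_dvd hmonic).mpr hdvd
    have := Polynomial.modByMonic_add_div χ ((X - C r) ^ k)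
    rw [hmod, zero_add] at this
    exact this
  have hqtroot : qt.eval r = 0 := by
    have hdvd1 : (X - C r) ^ (k + 1) ∣ χ := (Polynomial.le_rootMultiplicity_iff hχ0).mp hkm
    rw [← hqt, pow_succ] at hdvd1
    have hx : (X - C r) ∣ qt := by
      have hne : ((X - C r : ℝ[X]) ^ k) ≠ 0 := pow_ne_zero _ (X_sub_C_ne_zero r)
      obtain ⟨w, hw⟩ := hdvd1
      refine ⟨w, mul_left_cancel₀ hne ?_⟩
      rw [hw]; ring
    exact Polynomial.dvd_iff_isRoot.mp hx
  -- B = (X - C r) ^ k • Cm and cancellation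
  have hBeq : B = ((X - C r) ^ k : ℝ[X]) • Cm := by
    ext i j
    rw [Matrix.smul_apply, smul_eq_mul, hCm]
  have hmulCm : charmatrix A * Cm = qt • (1 : Matrix (Fin n) (Fin n) ℝ[X]) := by
    have h1 : charmatrix A * B = ((X - C r) ^ k : ℝ[X]) • (charmatrix A * Cm) := by
      rw [hBeq, Matrix.mul_smul]
    have h2 : (χ : ℝ[X]) • (1 : Matrix (Fin n) (Fin n) ℝ[X])
        = ((X - C r) ^ k : ℝ[X]) • (qt • (1 : Matrix (Fin n) (Fin n) ℝ[X])) := by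
      rw [smul_smul, hqt]
    rw [h1, h2] at hBid
    refine Matrix.ext fun i j => ?_
    have := congrFun (congrFun hBid i) j
    rw [Matrix.smul_apply, Matrix.smul_apply, smul_eq_mul, smul_eq_mul] at this
    exact mul_left_cancel₀ (pow_ne_zero _ (X_sub_C_ne_zero r)) this
  -- evaluate at r
  set V : Matrix (Fin n) (Fin n) ℝ := Cm.map (evalRingHom r) with hVdef
  have hAV : A * V = r • V := by
    have h1 : (charmatrix A * Cm).map ⇑(evalRingHom r)
        = (qt • (1 : Matrix (Fin n) (Fin n) ℝ[X])).map ⇑(evalRingHom r) := by rw [hmulCm]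
    rw [Matrix.map_mul, charmatrix_map_eval] at h1
    have h2 : (qt • (1 : Matrix (Fin n) (Fin n) ℝ[X])).map ⇑(evalRingHom r)
        = (0 : Matrix (Fin n) (Fin n) ℝ) := by
      ext i j
      by_cases h : i = j <;>
        simp [h, Matrix.map_apply, Matrix.smul_apply, Matrix.one_apply, hqtroot]
    rw [h2] at h1
    have h3 : (r • (1 : Matrix (Fin n) (Fin n) ℝ) - A) * V = 0 := h1
    rw [Matrix.sub_mul, Matrix.smul_mul, Matrix.one_mul, sub_eq_zero] at h3
    exact h3.symm
  -- nonnegativity of V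
  have hVnn : ∀ i j, 0 ≤ V i j := by
    intro i j
    have htend : Tendsto (fun s : ℝ => (Cm i j).eval s) (nhdsWithin r (Set.Ioi r))
        (nhds ((Cm i j).eval r)) :=
      ((Polynomial.continuous (Cm i j)).tendsto r).mono_left nhdsWithin_le_nhds
    have hev : ∀ᶠ s in nhdsWithin r (Set.Ioi r), 0 ≤ (Cm i j).eval s := by
      refine eventually_nhdsWithin_of_forall (fun s hs => ?_)
      have hsr : r < s := hs
      have hadj := adjugate_nonneg hn A hA hr hroot hsr
      have hBsij : (B i j).eval s = adjugate (s • (1 : Matrix (Fin n) (Fin n) ℝ) - A) i j := by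
        have := RingHom.map_adjugate (evalRingHom s) (charmatrix A)
        have h4 : (evalRingHom s).mapMatrix (charmatrix A) = s • (1 : Matrix (Fin n) (Fin n) ℝ) - A :=
          charmatrix_map_eval A s
        rw [h4] at this
        have h5 := congrFun (congrFun this i) j
        exact h5
      have hBnn : 0 ≤ (B i j).eval s := by rw [hBsij]; exact hadj i j
      have hfac : (B i j).eval s = (s - r) ^ k * (Cm i j).eval s := by
        rw [← hCm i j]; simp
      rw [hfac] at hBnn
      exact (mul_nonneg_iff_of_pos_left (pow_pos (sub_pos.mpr hsr) k)).mp hBnn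
    exact ge_of_tendsto htend hev
  -- nonvanishing entry
  have hVp0 : V p0.1 p0.2 ≠ 0 := by
    intro h
    have hrootCm : (Cm p0.1 p0.2).IsRoot r := h
    have hdvdCm : (X - C r) ∣ Cm p0.1 p0.2 := Polynomial.dvd_iff_isRoot.mpr hrootCm
    obtain ⟨w, hw⟩ := hdvdCm
    apply hndvd
    refine ⟨w, ?_⟩
    rw [← hCm p0.1 p0.2, hw, pow_succ]
    ring
  refine ⟨fun i => V i p0.2, fun i => hVnn i p0.2, ?_, ?_⟩
  · intro h
    exact hVp0 (congrFun h p0.1)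
  · ext i
    have := congrFun (congrFun hAV i) p0.2
    rw [Matrix.mul_apply] at this
    simpa [Matrix.mulVec, dotProduct, Matrix.smul_apply] using this

end GuoAux3
namespace GuoAux4
open GuoAux GuoAux2 GuoAux3

variable {n : ℕ}

lemma row_mul_mul_col {K : Type*} [CommRing K] (N : Matrix (Fin n) (Fin n) K)
    (w u : Fin n → K) (d d' : Unit) :
    (replicateRow Unit w * N * replicateCol Unit u) d d' = w ⬝ᵥ (N *ᵥ u) := by
  rw [Matrix.mul_assoc]
  simp [Matrix.mul_apply, Matrix.replicateRow_apply, Matrix.replicateCol_apply, dotProduct, Matrix.mulVec]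

set_option synthInstance.maxHeartbeats 1000000 in
set_option maxHeartbeats 1000000 in
/-- Brauer's theorem, polynomial identity form. -/
lemma brauer (A : Matrix (Fin n) (Fin n) ℝ) (v q : Fin n → ℝ) {r ε : ℝ}
    (hv : A *ᵥ v = r • v) (hqv : q ⬝ᵥ v = ε) :
    (X - C r) * (A + vecMulVec v q).charpoly = (X - C (r + ε)) * A.charpoly := by
  set φ : ℝ[X] →+* RatFunc ℝ := (algebraMap ℝ[X] (RatFunc ℝ) : ℝ[X] →+* RatFunc ℝ) with hφdef
  have hinj : Function.Injective ⇑φ := RatFunc.algebraMap_injective ℝ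
  apply hinj
  set M : Matrix (Fin n) (Fin n) (RatFunc ℝ) := (charmatrix A).map ⇑φ with hMdef
  have hdet : M.det = φ A.charpoly := by
    rw [hMdef, Matrix.charpoly, ← RingHom.mapMatrix_apply, ← RingHom.map_det]
  have hMunit : IsUnit M.det := by
    rw [hdet, isUnit_iff_ne_zero]
    exact (map_ne_zero_iff φ hinj).mpr A.charpoly_monic.ne_zero
  set u : Fin n → RatFunc ℝ := fun i => φ (C (v i)) with hudef
  set w : Fin n → RatFunc ℝ := fun j => φ (C (q j)) with hwdef
  set c : RatFunc ℝ := φ (X - C r) with hcdef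
  have hc0 : c ≠ 0 := (map_ne_zero_iff φ hinj).mpr (X_sub_C_ne_zero r)
  -- the characteristic matrix of the perturbed matrix
  have h1 : ((charmatrix (A + vecMulVec v q)).map ⇑φ) = M + replicateCol Unit (-u) * replicateRow Unit w := by
    rw [← Matrix.vecMulVec_eq]
    ext i j
    by_cases h : i = j <;>
      simp [h, hMdef, charmatrix_apply, Matrix.vecMulVec_apply, Matrix.map_apply,
        Matrix.add_apply, Matrix.diagonal_apply, map_add, map_sub, _root_.map_mul,
        hudef, hwdef] <;> ring
  -- eigenvector identity in ℝ[X]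
  have hch : charmatrix A *ᵥ (fun j => C (v j)) = fun i => (X - C r) * C (v i) := by
    funext i
    have h2 : (A *ᵥ v) i = r * v i := by rw [hv]; rfl
    calc (charmatrix A *ᵥ fun j => C (v j)) i
        = ∑ j, ((Matrix.diagonal fun _ => (X:ℝ[X])) i j - C (A i j)) * C (v j) := by
          simp [Matrix.mulVec, dotProduct, charmatrix_apply]
      _ = (∑ j, (Matrix.diagonal fun _ => (X:ℝ[X])) i j * C (v j)) - ∑ j, C (A i j) * C (v j) := by
          simp_rw [sub_mul]
          rw [Finset.sum_sub_distrib]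
      _ = X * C (v i) - C ((A *ᵥ v) i) := by
          congr 1
          · rw [Finset.sum_eq_single i]
            · simp
            · intro j _ hj
              simp [Matrix.diagonal_apply, Ne.symm hj]
            · intro h; exact absurd (Finset.mem_univ i) h
          · rw [show (A *ᵥ v) i = ∑ j, A i j * v j from rfl, map_sum]
            simp [_root_.map_mul]
      _ = (X - C r) * C (v i) := by
          rw [h2, _root_.map_mul]
          ring
  -- mapped eigenvector identity
  have h3 : M *ᵥ u = c • u := by
    funext i
    calc (M *ᵥ u) i = φ ((charmatrix A *ᵥ fun j => C (v j)) i) := by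
          simp [hMdef, hudef, Matrix.mulVec, dotProduct, Matrix.map_apply, map_sum, _root_.map_mul]
      _ = φ ((X - C r) * C (v i)) := by rw [hch]
      _ = c * u i := by rw [_root_.map_mul]
  have h4 : M⁻¹ *ᵥ u = c⁻¹ • u := by
    have hMM : M⁻¹ * M = 1 := Matrix.nonsing_inv_mul M hMunit
    have h5 : M⁻¹ *ᵥ (M *ᵥ u) = u := by rw [Matrix.mulVec_mulVec, hMM, Matrix.one_mulVec]
    rw [h3, Matrix.mulVec_smul] at h5
    exact ((inv_smul_eq_iff₀ hc0).mpr h5.symm).symm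
  have hwu : w ⬝ᵥ u = φ (C ε) := by
    calc w ⬝ᵥ u = ∑ j, φ (C (q j * v j)) := by
          simp [dotProduct, hwdef, hudef, _root_.map_mul]
      _ = φ (C (∑ j, q j * v j)) := by rw [← map_sum, ← map_sum]
      _ = φ (C ε) := by rw [show (∑ j, q j * v j) = ε from hqv]
  have hdet2 : ((charmatrix (A + vecMulVec v q)).map ⇑φ).det
      = φ A.charpoly * (1 - φ (C ε) * c⁻¹) := by
    rw [h1, Matrix.det_add_replicateCol_mul_replicateRow hMunit, hdet]
    congr 1
    rw [Matrix.det_unique, Matrix.add_apply, Matrix.one_apply_eq, row_mul_mul_col,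
      Matrix.mulVec_neg, h4]
    rw [dotProduct_neg, dotProduct_smul, hwu, smul_eq_mul]
    ring
  have hlhs : φ ((A + vecMulVec v q).charpoly) = φ A.charpoly * (1 - φ (C ε) * c⁻¹) := by
    rw [← hdet2, Matrix.charpoly, ← RingHom.mapMatrix_apply, ← RingHom.map_det]
  rw [_root_.map_mul, _root_.map_mul, hlhs, ← hcdef]
  have hre : φ (X - C (r + ε)) = c - φ (C ε) := by
    rw [hcdef, ← map_sub]
    congr 1
    rw [C_add]
    ring
  rw [hre]
  field_simp

end GuoAux4

/-- A list of complex numbers is realizable if it is the spectrum (counted with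
algebraic multiplicity) of an entrywise nonnegative real matrix. -/
def Realizable {n : ℕ} (l : Fin n → ℂ) : Prop :=
  ∃ A : Matrix (Fin n) (Fin n) ℝ, (∀ i j, 0 ≤ A i j) ∧
    (A.map (Complex.ofReal)).charpoly = ∏ i, (X - C (l i))

/-- If `Λ = (λ_1, …, λ_n)` is realizable with Perron eigenvalue `λ_1`, then for every
`ε ≥ 0` the list `(λ_1 + ε, λ_2, …, λ_n)` is also realizable. -/
theorem realizable_add_eps (n : ℕ) (hn : 0 < n) (l : Fin n → ℂ)
    (h1 : (l ⟨0, hn⟩).im = 0)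
    (hperron : ∀ i, ‖l i‖ ≤ (l ⟨0, hn⟩).re)
    (hreal : Realizable l) (ε : ℝ) (hε : 0 ≤ ε) :
    Realizable (Function.update l ⟨0, hn⟩ (l ⟨0, hn⟩ + (ε : ℂ))) := by
  obtain ⟨A, hA, hchar⟩ := hreal
  set i₀ : Fin n := ⟨0, hn⟩ with hi₀
  set r : ℝ := (l i₀).re with hrdef
  have hr0 : 0 ≤ r := le_trans (norm_nonneg _) (hperron i₀)
  have hl0 : l i₀ = (r : ℂ) := by
    apply Complex.ext
    · simp [hrdef]
    · simp [h1]
  have hcharR : A.charpoly.map Complex.ofRealHom = ∏ i, (X - C (l i)) := by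
    rw [← Matrix.charpoly_map A Complex.ofRealHom]
    exact hchar
  have hroot : ∀ z : ℂ, (A.charpoly.map Complex.ofRealHom).eval z = 0 → ‖z‖ ≤ r := by
    intro z hz
    rw [hcharR, Polynomial.eval_prod] at hz
    obtain ⟨i, _, hzi⟩ := Finset.prod_eq_zero_iff.mp hz
    have : z = l i := by
      have := hzi
      simp only [Polynomial.eval_sub, Polynomial.eval_X, Polynomial.eval_C] at this
      linear_combination this
    rw [this]
    exact hperron i
  have heval : A.charpoly.eval r = 0 := by
    have hc : Complex.ofRealHom (A.charpoly.eval r) = 0 := by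
      rw [← Polynomial.eval₂_at_apply, ← Polynomial.eval_map, hcharR, Polynomial.eval_prod]
      refine Finset.prod_eq_zero (Finset.mem_univ i₀) ?_
      simp [hl0]
    exact Complex.ofReal_eq_zero.mp hc
  obtain ⟨v, hvnn, hvne, hveq⟩ :=
    GuoAux3.exists_nonneg_eigenvector hn A hA hr0 hroot heval
  obtain ⟨i1, hi1⟩ := Function.ne_iff.mp hvne
  have hvi1 : 0 < v i1 := lt_of_le_of_ne (hvnn i1) (Ne.symm hi1)
  set qv : Fin n → ℝ := fun j => if j = i1 then ε / v i1 else 0 with hqvdef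
  have hqv : qv ⬝ᵥ v = ε := by
    rw [dotProduct]
    rw [Finset.sum_eq_single i1 (fun j _ hj => by simp [hqvdef, if_neg hj])
      (fun h => absurd (Finset.mem_univ i1) h)]
    simp [hqvdef, div_mul_cancel₀ ε (ne_of_gt hvi1)]
  set A' := A + vecMulVec v qv with hA'def
  have hA'nn : ∀ i j, 0 ≤ A' i j := by
    intro i j
    rw [hA'def, Matrix.add_apply, Matrix.vecMulVec_apply]
    refine add_nonneg (hA i j) (mul_nonneg (hvnn i) ?_)
    rw [hqvdef]
    by_cases h : j = i1 <;> simp [h]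
    exact div_nonneg hε hvi1.le
  have hbrauer := GuoAux4.brauer A v qv hveq hqv
  refine ⟨A', hA'nn, ?_⟩
  have hq : (X - C (r : ℂ)) * (A'.map Complex.ofReal).charpoly
      = (X - C (((r + ε : ℝ)) : ℂ)) * ∏ i, (X - C (l i)) := by
    have h2 := congrArg (Polynomial.map (Complex.ofRealHom : ℝ →+* ℂ)) hbrauer
    rw [Polynomial.map_mul, Polynomial.map_mul, Polynomial.map_sub, Polynomial.map_sub,
      Polynomial.map_X, Polynomial.map_C, Polynomial.map_C,
      ← Matrix.charpoly_map A' Complex.ofRealHom, hcharR] at h2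
    exact_mod_cast h2
  have hprod1 : (∏ i, (X - C (l i)))
      = (X - C (l i₀)) * ∏ i ∈ Finset.univ.erase i₀, (X - C (l i)) :=
    (Finset.mul_prod_erase Finset.univ _ (Finset.mem_univ i₀)).symm
  have hprod2 : (∏ i, (X - C (Function.update l i₀ (l i₀ + (ε:ℂ)) i)))
      = (X - C (l i₀ + (ε:ℂ))) * ∏ i ∈ Finset.univ.erase i₀, (X - C (l i)) := by
    rw [← Finset.mul_prod_erase Finset.univ _ (Finset.mem_univ i₀), Function.update_self]
    congr 1
    refine Finset.prod_congr rfl fun i hi => ?_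
    rw [Function.update_of_ne (Finset.ne_of_mem_erase hi)]
  apply mul_left_cancel₀ (Polynomial.X_sub_C_ne_zero ((r : ℂ)))
  rw [hq, hprod2, hprod1, hl0]
  push_cast
  ring
end

section
/- (Rado's theorem) Let A be an n×n complex matrix whose characteristic polynomial equals ∏_{i=1}^n (X − λ_i). Let X be an n×r complex matrix of rank r (r ≤ n) whose columns x_1, …, x_r satisfy A·x_i = λ_i·x_i for i = 1, …, r, and let C be an arbitrary r×n complex matrix. Then the characteristic polynomial of A + X·C equals the characteristic polynomial of the r×r matrix Ω + C·X multiplied by ∏_{i=r+1}^n (X − λ_i), where Ω = diag(λ_1, …, λ_r); that is, A + X·C has eigenvalues μ_1, …, μ_r, λ_{r+1}, …, λ_n, where μ_1, …, μ_r are the eigenvalues of Ω + C·X. -/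
open Polynomial Matrix Finset

private lemma sumExtend_apply_inl {K V ι : Type*} [Field K] [AddCommGroup V] [Module K V]
    {v : ι → V} (hs : LinearIndependent K v) (i : ι) :
    Module.Basis.sumExtend hs (Sum.inl i) = v i := by
  classical
  simp [Module.Basis.sumExtend, Module.Basis.reindex_apply, Equiv.sumCongr, Sum.map_inl,
    Equiv.Set.sumDiffSubset_apply_inl, Set.inclusion, Equiv.ofLeftInverse, Equiv.ofInjective]
  rfl

private lemma charpoly_toLin'_eq {n : ℕ} (A : Matrix (Fin n) (Fin n) ℂ) :
    (Matrix.toLin' A).charpoly = A.charpoly := by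
  rw [← LinearMap.charpoly_toMatrix (Matrix.toLin' A) (Pi.basisFun ℂ (Fin n))]
  congr 1
  ext i j
  simp [LinearMap.toMatrix_apply, Matrix.toLin'_apply, Matrix.mulVec, dotProduct,
    Pi.basisFun_apply, Pi.basisFun_repr, Pi.single_apply]

private lemma charpoly_diagonal {r : ℕ} (d : Fin r → ℂ) :
    (Matrix.diagonal d).charpoly = ∏ i, (X - C (d i)) := by
  rw [Matrix.charpoly_of_upperTriangular _ (Matrix.blockTriangular_diagonal d)]
  simp

/-- **Rado's theorem.** If the columns of the rank-`r` matrix `Xm` are eigenvectors of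
`A` for the eigenvalues `λ_1, …, λ_r`, then for any `r × n` matrix `Cm`, the matrix
`A + Xm·Cm` has eigenvalues `μ_1, …, μ_r, λ_{r+1}, …, λ_n`, where `μ_1, …, μ_r` are the
eigenvalues of `Ω + Cm·Xm` with `Ω = diag(λ_1, …, λ_r)`. -/
theorem rado (n r : ℕ) (hr : r ≤ n) (A : Matrix (Fin n) (Fin n) ℂ) (l : Fin n → ℂ)
    (hA : A.charpoly = ∏ i, (X - C (l i)))
    (Xm : Matrix (Fin n) (Fin r) ℂ) (hrank : Xm.rank = r)
    (hAX : A * Xm = Xm * Matrix.diagonal (fun i : Fin r => l (Fin.castLE hr i)))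
    (Cm : Matrix (Fin r) (Fin n) ℂ) :
    (A + Xm * Cm).charpoly =
      (Matrix.diagonal (fun i : Fin r => l (Fin.castLE hr i)) + Cm * Xm).charpoly *
        ∏ i ∈ univ.filter (fun i : Fin n => r ≤ (i : ℕ)), (X - C (l i)) := by
  classical
  set d : Fin r → ℂ := fun i => l (Fin.castLE hr i) with hd
  -- columns of Xm are linearly independent
  have hv : LinearIndependent ℂ Xmᵀ := by
    have hcol : LinearIndependent ℂ Xm.col := by
      rw [linearIndependent_iff_card_eq_finrank_span, Set.finrank,
        ← Matrix.rank_eq_finrank_span_cols, hrank, Fintype.card_fin]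
    exact hcol
  set b := Module.Basis.sumExtend hv with hb
  haveI hfin : Finite (Fin r ⊕ ↑(Module.Basis.sumExtendIndex hv)) :=
    @Finite.of_fintype _ (FiniteDimensional.fintypeBasisIndex b)
  haveI : Finite ↑(Module.Basis.sumExtendIndex hv) := Finite.sum_right (Fin r)
  haveI : Fintype ↑(Module.Basis.sumExtendIndex hv) := Fintype.ofFinite _
  have hbl : ∀ i, b (Sum.inl i) = Xmᵀ i := fun i => sumExtend_apply_inl hv i
  -- representation of Xm *ᵥ u in basis b
  have hXv : ∀ u : Fin r → ℂ, Xm *ᵥ u = ∑ k, u k • b (Sum.inl k) := by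
    intro u
    funext j
    simp only [Matrix.mulVec, dotProduct, Finset.sum_apply, Pi.smul_apply, hbl,
      Matrix.transpose_apply, smul_eq_mul]
    exact Finset.sum_congr rfl fun k _ => mul_comm _ _
  have hrepr : ∀ (u : Fin r → ℂ) (x : Sum (Fin r) (Module.Basis.sumExtendIndex hv)),
      b.repr (Xm *ᵥ u) x = Sum.elim u 0 x := by
    intro u x
    rw [hXv u, map_sum]
    cases x with
    | inl k =>
      simp [Finsupp.single_apply]
    | inr s =>
      simp
  set f := Matrix.toLin' A with hf
  set g := Matrix.toLin' (A + Xm * Cm) with hg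
  set M := LinearMap.toMatrix b b f with hM
  set N := LinearMap.toMatrix b b g with hN
  -- action on the distinguished basis vectors
  have hfbl : ∀ i, f (b (Sum.inl i)) = Xm *ᵥ (fun k => Matrix.diagonal d k i) := by
    intro i
    rw [hbl]
    funext j
    have := congrFun (congrFun hAX j) i
    simp only [Matrix.mul_apply] at this
    simp only [hf, Matrix.toLin'_apply, Matrix.mulVec, dotProduct, Matrix.transpose_apply]
    rw [this]
  have hgbl : ∀ i, g (b (Sum.inl i)) =
      Xm *ᵥ (fun k => (Matrix.diagonal d + Cm * Xm) k i) := by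
    intro i
    have h1 : g (b (Sum.inl i)) = f (b (Sum.inl i)) + Xm *ᵥ (Cm *ᵥ b (Sum.inl i)) := by
      simp [hg, hf, Matrix.toLin'_apply, Matrix.add_mulVec, Matrix.mulVec_mulVec]
    rw [h1, hfbl, ← Matrix.mulVec_add]
    have harg : ((fun k => Matrix.diagonal d k i) + Cm *ᵥ b (Sum.inl i)) =
        fun k => (Matrix.diagonal d + Cm * Xm) k i := by
      funext k
      rw [hbl]
      simp [Matrix.mulVec, Matrix.mul_apply, dotProduct]
    rw [harg]
  have hgbr : ∀ s, g (b (Sum.inr s)) = f (b (Sum.inr s)) + Xm *ᵥ (Cm *ᵥ b (Sum.inr s)) := by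
    intro s
    simp [hg, hf, Matrix.toLin'_apply, Matrix.add_mulVec, Matrix.mulVec_mulVec]
  -- block structure
  have hMblock : M = Matrix.fromBlocks (Matrix.diagonal d) (M.toBlocks₁₂) 0 (M.toBlocks₂₂) := by
    ext x y
    cases x with
    | inl k =>
      cases y with
      | inl i =>
        simp only [Matrix.fromBlocks_apply₁₁]
        rw [hM, LinearMap.toMatrix_apply, hfbl, hrepr]
        simp
      | inr s => simp [Matrix.toBlocks₁₂]
    | inr t =>
      cases y with
      | inl i =>
        simp only [Matrix.fromBlocks_apply₂₁, Matrix.zero_apply]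
        rw [hM, LinearMap.toMatrix_apply, hfbl, hrepr]
        simp
      | inr s => simp [Matrix.toBlocks₂₂]
  have hNblock : N = Matrix.fromBlocks (Matrix.diagonal d + Cm * Xm) (N.toBlocks₁₂) 0
      (M.toBlocks₂₂) := by
    ext x y
    cases x with
    | inl k =>
      cases y with
      | inl i =>
        simp only [Matrix.fromBlocks_apply₁₁]
        rw [hN, LinearMap.toMatrix_apply, hgbl, hrepr]
        simp
      | inr s => simp [Matrix.toBlocks₁₂]
    | inr t =>
      cases y with
      | inl i =>
        simp only [Matrix.fromBlocks_apply₂₁, Matrix.zero_apply]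
        rw [hN, LinearMap.toMatrix_apply, hgbl, hrepr]
        simp
      | inr s =>
        simp only [Matrix.fromBlocks_apply₂₂, Matrix.toBlocks₂₂, Matrix.of_apply,
          Matrix.submatrix_apply]
        rw [hN, hM, LinearMap.toMatrix_apply, LinearMap.toMatrix_apply, hgbr, map_add,
          Finsupp.add_apply, hrepr]
        simp
  -- charpoly computations
  have hMc : A.charpoly = (Matrix.diagonal d).charpoly * (M.toBlocks₂₂).charpoly := by
    rw [← charpoly_toLin'_eq, ← hf, ← LinearMap.charpoly_toMatrix f b, ← hM]
    conv_lhs => rw [hMblock]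
    rw [Matrix.charpoly_fromBlocks_zero₂₁]
  have hNc : (A + Xm * Cm).charpoly =
      (Matrix.diagonal d + Cm * Xm).charpoly * (M.toBlocks₂₂).charpoly := by
    rw [← charpoly_toLin'_eq, ← hg, ← LinearMap.charpoly_toMatrix g b, ← hN]
    conv_lhs => rw [hNblock]
    rw [Matrix.charpoly_fromBlocks_zero₂₁]
  -- identify the second factor
  have hΩprod : (Matrix.diagonal d).charpoly =
      ∏ i ∈ univ.filter (fun i : Fin n => ¬ r ≤ (i : ℕ)), (X - C (l i)) := by
    rw [charpoly_diagonal]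
    refine Finset.prod_bij (fun i _ => Fin.castLE hr i) ?_ ?_ ?_ ?_
    · intro i _
      simp [Fin.castLE, i.isLt]
    · intro i _ j _ h
      exact Fin.castLE_injective hr h
    · intro j hj
      simp only [Finset.mem_filter, not_le] at hj
      exact ⟨⟨(j : ℕ), hj.2⟩, Finset.mem_univ _, by ext; simp⟩
    · intro i _
      rfl
  have hsplit : (∏ i, (X - C (l i))) =
      (∏ i ∈ univ.filter (fun i : Fin n => ¬ r ≤ (i : ℕ)), (X - C (l i))) *
        ∏ i ∈ univ.filter (fun i : Fin n => r ≤ (i : ℕ)), (X - C (l i)) := by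
    rw [mul_comm]
    exact (Finset.prod_filter_mul_prod_filter_not univ (fun i : Fin n => r ≤ (i : ℕ)) _).symm
  have hD : (M.toBlocks₂₂).charpoly =
      ∏ i ∈ univ.filter (fun i : Fin n => r ≤ (i : ℕ)), (X - C (l i)) := by
    have h0 : (Matrix.diagonal d).charpoly ≠ 0 := (Matrix.charpoly_monic _).ne_zero
    apply mul_left_cancel₀ h0
    rw [← hMc, hA, hsplit, hΩprod]
  rw [hNc, hD]
end

section
/- Let Λ_1 = (α_1, α_2, …, α_n) and Λ_2 = (β_1, β_2, …, β_m) be realizable lists of complex numbers, with α_1 real, α_1 ≥ |α_i| for all i, and β_1 real, β_1 ≥ |β_j| for all j. Then for every ε ≥ max{β_1 − α_1, 0}, the list Λ = (α_1 + ε, β_1 − ε, α_2, …, α_n, β_2, …, β_m) of length n + m is realizable. -/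
open Polynomial Matrix Finset

set_option linter.unusedSectionVars false
set_option linter.unusedVariables false
set_option maxHeartbeats 1000000

open Filter Topology

section AuxGeneric

variable {n : Type*} [Fintype n] [DecidableEq n]

theorem eval_charpoly' {R : Type*} [CommRing R] (M : Matrix n n R) (r : R) :
    (M.charpoly).eval r = (r • (1 : Matrix n n R) - M).det := by
  rw [Matrix.charpoly, Polynomial.eval, ← coe_eval₂RingHom, RingHom.map_det]
  congr 1
  ext i j
  by_cases h : i = j <;>
    simp [h, charmatrix_apply_eq, charmatrix_apply_ne, Matrix.one_apply, Matrix.sub_apply]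

/-- entrywise bound on powers of a nonneg matrix -/
theorem pow_entry_bound (A : Matrix n n ℝ) (hA : ∀ i j, 0 ≤ A i j) (μ : ℝ) (hμ0 : 0 ≤ μ)
    (hμ : ∀ i j, A i j ≤ μ) (N : ℕ) (i j : n) :
    (A ^ N) i j ≤ ((Fintype.card n : ℝ) * μ) ^ N := by
  induction N generalizing i j with
  | zero =>
    simp only [pow_zero]
    by_cases h : i = j <;> simp [Matrix.one_apply, h]
  | succ N ih =>
    rw [pow_succ, Matrix.mul_apply]
    calc ∑ k, (A ^ N) i k * A k j ≤ ∑ _k : n, ((Fintype.card n : ℝ) * μ) ^ N * μ := by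
          apply Finset.sum_le_sum
          intro k _
          apply mul_le_mul (ih i k) (hμ k j) (hA k j)
          positivity
      _ = ((Fintype.card n : ℝ) * μ) ^ (N + 1) := by
          rw [Finset.sum_const, card_univ, nsmul_eq_mul]
          ring

theorem pow_entry_nonneg (A : Matrix n n ℝ) (hA : ∀ i j, 0 ≤ A i j) (N : ℕ) (i j : n) :
    0 ≤ (A ^ N) i j := by
  induction N generalizing i j with
  | zero => by_cases h : i = j <;> simp [pow_zero, Matrix.one_apply, h]
  | succ N ih =>
    rw [pow_succ, Matrix.mul_apply]
    exact Finset.sum_nonneg fun k _ => mul_nonneg (ih i k) (hA k j)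

theorem mul_entry_nonneg (A B : Matrix n n ℝ) (hA : ∀ i j, 0 ≤ A i j) (hB : ∀ i j, 0 ≤ B i j)
    (i j : n) : 0 ≤ (A * B) i j := by
  rw [Matrix.mul_apply]
  exact Finset.sum_nonneg fun k _ => mul_nonneg (hA i k) (hB k j)

theorem det_abs_bound (M : Matrix n n ℝ) (ν : ℝ) (hν0 : 0 ≤ ν) (hν : ∀ i j, |M i j| ≤ ν) :
    |M.det| ≤ (Nat.factorial (Fintype.card n) : ℝ) * ν ^ (Fintype.card n) := by
  rw [Matrix.det_apply]
  calc |∑ σ : Equiv.Perm n, Equiv.Perm.sign σ • ∏ i, M (σ i) i|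
      ≤ ∑ σ : Equiv.Perm n, |Equiv.Perm.sign σ • ∏ i, M (σ i) i| :=
        Finset.abs_sum_le_sum_abs _ _
    _ ≤ ∑ _σ : Equiv.Perm n, ν ^ (Fintype.card n) := by
        apply Finset.sum_le_sum
        intro σ _
        rw [Units.smul_def, zsmul_eq_mul, abs_mul]
        have h1 : |((Equiv.Perm.sign σ : ℤ) : ℝ)| = 1 := by
          rcases Int.units_eq_one_or (Equiv.Perm.sign σ) with h | h <;> simp [h]
        rw [h1, one_mul, Finset.abs_prod]
        calc ∏ i, |M (σ i) i| ≤ ∏ _i : n, ν :=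
              Finset.prod_le_prod (fun i _ => abs_nonneg _) (fun i _ => hν _ _)
          _ = ν ^ (Fintype.card n) := by rw [Finset.prod_const, card_univ]
    _ = (Nat.factorial (Fintype.card n) : ℝ) * ν ^ (Fintype.card n) := by
        rw [Finset.sum_const, card_univ, nsmul_eq_mul, Fintype.card_perm]

/-- Neumann series argument: if `X` is entrywise nonnegative with small entries and `1 - X`
is invertible, then `(1 - X)⁻¹` is entrywise nonnegative. -/
theorem inv_one_sub_nonneg (X : Matrix n n ℝ) (hX : ∀ i j, 0 ≤ X i j) (μ : ℝ) (hμ0 : 0 ≤ μ)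
    (hμ : ∀ i j, X i j ≤ μ) (hc : (Fintype.card n : ℝ) * μ < 1)
    (hu : IsUnit (1 - X).det) (i j : n) : 0 ≤ (1 - X)⁻¹ i j := by
  set R := (1 - X)⁻¹ with hR
  set c := (Fintype.card n : ℝ) * μ with hcdef
  have hc0 : 0 ≤ c := by positivity
  set K := ∑ k, |R k j| with hK
  have hK0 : 0 ≤ K := Finset.sum_nonneg fun k _ => abs_nonneg _
  have key : ∀ N : ℕ, -(c ^ N * K) ≤ R i j := by
    intro N
    have hgeom : (∑ l ∈ Finset.range N, X ^ l) * (1 - X) = 1 - X ^ N := by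
      have := geom_sum_mul X N
      have h2 : (∑ l ∈ Finset.range N, X ^ l) * (X - 1) = X ^ N - 1 := this
      calc (∑ l ∈ Finset.range N, X ^ l) * (1 - X)
          = -((∑ l ∈ Finset.range N, X ^ l) * (X - 1)) := by noncomm_ring
        _ = 1 - X ^ N := by rw [h2]; noncomm_ring
    have hS : (∑ l ∈ Finset.range N, X ^ l) = (1 - X ^ N) * R := by
      rw [hR, ← hgeom, Matrix.mul_nonsing_inv_cancel_right _ _ hu]
    have hSij : 0 ≤ ((∑ l ∈ Finset.range N, X ^ l)) i j := by
      rw [Matrix.sum_apply]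
      exact Finset.sum_nonneg fun l _ => pow_entry_nonneg X hX l i j
    have hexp : ((∑ l ∈ Finset.range N, X ^ l)) i j = R i j - (X ^ N * R) i j := by
      rw [hS, Matrix.sub_mul, Matrix.one_mul, Matrix.sub_apply]
    have hbound : |(X ^ N * R) i j| ≤ c ^ N * K := by
      rw [Matrix.mul_apply, hK, Finset.mul_sum]
      apply (Finset.abs_sum_le_sum_abs _ _).trans
      apply Finset.sum_le_sum
      intro k _
      rw [abs_mul, abs_of_nonneg (pow_entry_nonneg X hX N i k)]
      exact mul_le_mul_of_nonneg_right (pow_entry_bound X hX μ hμ0 hμ N i k) (abs_nonneg _)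
    have h3 := abs_le.mp hbound
    rw [hexp] at hSij
    linarith
  by_contra hneg
  push_neg at hneg
  obtain ⟨N, hN⟩ := exists_pow_lt_of_lt_one (x := -(R i j) / (K + 1)) (div_pos (by linarith) (by positivity)) hc
  rw [lt_div_iff₀ (by positivity)] at hN
  nlinarith [key N, pow_nonneg hc0 N]

theorem resolvent_nonneg (A : Matrix n n ℝ) (hA : ∀ i j, 0 ≤ A i j) (a : ℝ)
    (hdlb : ∀ s, a < s → (s - a) ^ (Fintype.card n) ≤ |(s • (1 : Matrix n n ℝ) - A).det|)
    (t : ℝ) (ht : a < t) (i j : n) : 0 ≤ (t • (1 : Matrix n n ℝ) - A)⁻¹ i j := by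
  classical
  set q := Fintype.card n with hq
  -- units
  have hU : ∀ s, a < s → IsUnit ((s • (1 : Matrix n n ℝ) - A).det) := by
    intro s hs
    rw [isUnit_iff_ne_zero]
    intro h0
    have := hdlb s hs
    rw [h0, abs_zero] at this
    nlinarith [pow_pos (by linarith : (0:ℝ) < s - a) q]
  -- entry bound on A
  set μ := ∑ k, ∑ l, A k l with hμdef
  have hμ0 : 0 ≤ μ := Finset.sum_nonneg fun k _ => Finset.sum_nonneg fun l _ => hA k l
  have hμ : ∀ i j, A i j ≤ μ := by
    intro i j
    calc A i j ≤ ∑ l, A i l := Finset.single_le_sum (fun l _ => hA i l) (Finset.mem_univ j)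
      _ ≤ μ := Finset.single_le_sum (f := fun k => ∑ l, A k l)
          (fun k _ => Finset.sum_nonneg fun l _ => hA k l) (Finset.mem_univ i)
  set t0 := max t ((q : ℝ) * μ + |a| + 1) with ht0def
  have htt0 : t ≤ t0 := le_max_left _ _
  have hmr : (q:ℝ) * μ + |a| + 1 ≤ t0 := le_max_right _ _
  have hqμ0 : 0 ≤ (q:ℝ) * μ := mul_nonneg (Nat.cast_nonneg q) hμ0
  have hat0 : a < t0 := by linarith [le_abs_self a]
  have hqμt0 : (q : ℝ) * μ < t0 := by linarith [abs_nonneg a]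
  have ht0pos : 0 < t0 := lt_of_le_of_lt (mul_nonneg (Nat.cast_nonneg q) hμ0) hqμt0
  -- base case : nonnegativity at t0
  have base : ∀ i j, 0 ≤ (t0 • (1 : Matrix n n ℝ) - A)⁻¹ i j := by
    intro i j
    set X := t0⁻¹ • A with hXdef
    have hfac : t0 • (1 : Matrix n n ℝ) - A = t0 • ((1 : Matrix n n ℝ) - X) := by
      rw [smul_sub, hXdef, smul_smul, mul_inv_cancel₀ (ne_of_gt ht0pos), one_smul]
    have hdet1X : IsUnit ((1 : Matrix n n ℝ) - X).det := by
      have h1 := hU t0 hat0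
      rw [hfac, Matrix.det_smul] at h1
      rw [isUnit_iff_ne_zero]
      intro h0
      rw [h0, mul_zero] at h1
      exact h1.ne_zero rfl
    have hinv : (t0 • (1 : Matrix n n ℝ) - A)⁻¹ = t0⁻¹ • ((1 : Matrix n n ℝ) - X)⁻¹ := by
      rw [hfac]
      apply Matrix.inv_eq_right_inv
      rw [Matrix.smul_mul, Matrix.mul_smul, smul_smul, mul_inv_cancel₀ (ne_of_gt ht0pos),
        one_smul, Matrix.mul_nonsing_inv _ hdet1X]
    rw [hinv, Matrix.smul_apply, smul_eq_mul]
    apply mul_nonneg (inv_nonneg.mpr (le_of_lt ht0pos))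
    apply inv_one_sub_nonneg X _ (t0⁻¹ * μ) (by positivity) _ _ hdet1X
    · intro i j; exact mul_nonneg (inv_nonneg.mpr (le_of_lt ht0pos)) (hA i j)
    · intro i j
      exact mul_le_mul_of_nonneg_left (hμ i j) (inv_nonneg.mpr (le_of_lt ht0pos))
    · have heq : (q:ℝ) * (t0⁻¹ * μ) = ((q:ℝ) * μ) / t0 := by field_simp
      rw [heq, div_lt_one ht0pos]
      exact hqμt0
  -- uniform bound on resolvent entries over [t, t0]
  set ν := |t| + |t0| + μ + 1 with hνdef
  have hν1 : 1 ≤ ν := by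
    have h1 := abs_nonneg t
    have h2 := abs_nonneg t0
    rw [hνdef]; linarith
  set K := ((t - a) ^ q)⁻¹ * ((Nat.factorial q : ℝ) * ν ^ q) with hKdef
  have hta : 0 < t - a := by linarith
  have hK0 : 0 ≤ K := by positivity
  have hRbound : ∀ s, t ≤ s → s ≤ t0 → ∀ i j, |(s • (1 : Matrix n n ℝ) - A)⁻¹ i j| ≤ K := by
    intro s hst hst0 i j
    have hsa : a < s := lt_of_lt_of_le ht hst
    have hMentry : ∀ k l, |(s • (1 : Matrix n n ℝ) - A) k l| ≤ ν := by
      intro k l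
      rw [Matrix.sub_apply, Matrix.smul_apply, smul_eq_mul]
      have h1 : |s * (1 : Matrix n n ℝ) k l| ≤ |s| := by
        by_cases h : k = l <;> simp [Matrix.one_apply, h, abs_nonneg]
      have hs_abs : |s| ≤ |t| + |t0| := by
        rw [abs_le]
        constructor
        · linarith [neg_abs_le t, abs_nonneg t0]
        · linarith [le_abs_self t0, abs_nonneg t]
      calc |s * (1 : Matrix n n ℝ) k l - A k l| ≤ |s * (1 : Matrix n n ℝ) k l| + |A k l| :=
            abs_sub _ _
        _ ≤ (|t| + |t0|) + μ := by
            rw [abs_of_nonneg (hA k l)]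
            linarith [h1.trans hs_abs, hμ k l]
        _ ≤ ν := by rw [hνdef]; linarith
    have hadj : ∀ k l, |(s • (1 : Matrix n n ℝ) - A).adjugate k l| ≤
        (Nat.factorial q : ℝ) * ν ^ q := by
      intro k l
      rw [Matrix.adjugate_apply]
      apply det_abs_bound _ _ (by linarith)
      intro k' l'
      by_cases h : k' = l
      · subst h
        rw [Matrix.updateRow_self]
        by_cases h2 : l' = k <;> simp [Pi.single_apply, h2] <;> linarith
      · rw [Matrix.updateRow_ne h]
        exact hMentry k' l'
    have hdetlow : (t - a) ^ q ≤ |(s • (1 : Matrix n n ℝ) - A).det| := by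
      calc (t - a) ^ q ≤ (s - a) ^ q := pow_le_pow_left₀ (le_of_lt hta) (by linarith) q
        _ ≤ _ := hdlb s hsa
    have hdetne : (s • (1 : Matrix n n ℝ) - A).det ≠ 0 := (hU s hsa).ne_zero
    rw [Matrix.inv_def, Matrix.smul_apply, Ring.inverse_eq_inv', smul_eq_mul, abs_mul, abs_inv]
    calc |(s • (1:Matrix n n ℝ) - A).det|⁻¹ * |(s • (1:Matrix n n ℝ) - A).adjugate i j|
        ≤ ((t - a) ^ q)⁻¹ * ((Nat.factorial q : ℝ) * ν ^ q) := by
          apply mul_le_mul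
          · exact inv_anti₀ (by positivity) hdetlow
          · exact hadj i j
          · exact abs_nonneg _
          · positivity
      _ = K := hKdef.symm
  -- step size
  set δ := ((q : ℝ) * (K + 1) + 1)⁻¹ with hδdef
  have hδpos : 0 < δ := by positivity
  have hδsmall : (q : ℝ) * (δ * K) < 1 := by
    have hpos : (0:ℝ) < (q : ℝ) * (K + 1) + 1 := by positivity
    have heq : (q:ℝ) * (δ * K) = ((q:ℝ) * K) / ((q : ℝ) * (K + 1) + 1) := by
      rw [hδdef]; field_simp
    rw [heq, div_lt_one hpos]
    nlinarith [Nat.cast_nonneg (α := ℝ) q]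
  -- downward induction from t0
  have hstep : ∀ N : ℕ, ∀ s : ℝ, t ≤ s → s ≤ t0 → t0 ≤ s + N * δ →
      ∀ i j, 0 ≤ (s • (1 : Matrix n n ℝ) - A)⁻¹ i j := by
    intro N
    induction N with
    | zero =>
      intro s h1 h2 h3 i j
      simp only [Nat.cast_zero, zero_mul, add_zero] at h3
      have : s = t0 := le_antisymm h2 h3
      rw [this]
      exact base i j
    | succ N ih =>
      intro s h1 h2 h3 i j
      by_cases hcase : t0 ≤ s + N * δ
      · exact ih s h1 h2 hcase i j
      · push_neg at hcase
        set s' := min (s + δ) t0 with hs'def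
        have hss' : s ≤ s' := le_min (by linarith) h2
        have hs't0 : s' ≤ t0 := min_le_right _ _
        have hts' : t ≤ s' := le_trans h1 hss'
        have hs'N : t0 ≤ s' + N * δ := by
          rcases le_total (s + δ) t0 with h | h
          · rw [hs'def, min_eq_left h]
            push_cast at h3 ⊢
            linarith
          · rw [hs'def, min_eq_right h]
            have : (0:ℝ) ≤ N * δ := by positivity
            linarith
        have hRs' : ∀ i j, 0 ≤ (s' • (1 : Matrix n n ℝ) - A)⁻¹ i j :=
          ih s' hts' hs't0 hs'N
        set d := s' - s with hddef
        have hd0 : 0 ≤ d := by linarith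
        have hdδ : d ≤ δ := by
          have := min_le_left (s + δ) t0
          rw [hddef]; linarith [this]
        set R' := (s' • (1 : Matrix n n ℝ) - A)⁻¹ with hR'def
        set X := d • R' with hXdef
        have hsa' : a < s' := lt_of_lt_of_le ht hts'
        have hdets' := hU s' hsa'
        have hXnn : ∀ i j, 0 ≤ X i j := by
          intro i j
          rw [hXdef, Matrix.smul_apply, smul_eq_mul]
          exact mul_nonneg hd0 (hRs' i j)
        have hXbd : ∀ i j, X i j ≤ δ * K := by
          intro i j
          rw [hXdef, Matrix.smul_apply, smul_eq_mul]
          have h4 : R' i j ≤ K := by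
            have := hRbound s' hts' hs't0 i j
            rw [← hR'def] at this
            exact (le_abs_self _).trans this
          apply mul_le_mul hdδ h4 (hRs' i j) (le_of_lt hδpos)
        have h5 : (s' • (1:Matrix n n ℝ) - A) * R' = 1 := Matrix.mul_nonsing_inv _ hdets'
        have hfac : s • (1 : Matrix n n ℝ) - A = (s' • 1 - A) * (1 - X) := by
          calc s • (1:Matrix n n ℝ) - A = (s' • 1 - A) - d • (1:Matrix n n ℝ) := by
                ext k l
                simp only [Matrix.sub_apply, Matrix.smul_apply, smul_eq_mul, hddef]
                ring
            _ = (s' • 1 - A) * (1 - X) := by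
                rw [Matrix.mul_sub, Matrix.mul_one, hXdef, Matrix.mul_smul, h5]
        have hdet1X : IsUnit ((1 : Matrix n n ℝ) - X).det := by
          have h6 := hU s (lt_of_lt_of_le ht h1)
          rw [hfac, Matrix.det_mul] at h6
          exact isUnit_of_mul_isUnit_right h6
        have hinvs : (s • (1 : Matrix n n ℝ) - A)⁻¹ = (1 - X)⁻¹ * R' := by
          rw [hfac, Matrix.mul_inv_rev, hR'def]
        rw [hinvs]
        apply mul_entry_nonneg
        · exact inv_one_sub_nonneg X hXnn (δ * K) (by positivity) hXbd hδsmall hdet1X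
        · exact hRs'
  obtain ⟨N, hN⟩ := exists_nat_ge ((t0 - t) / δ)
  have : t0 ≤ t + N * δ := by
    rw [div_le_iff₀ hδpos] at hN
    linarith
  exact hstep N t le_rfl htt0 this i j

theorem perron_exists [Nonempty n] (A : Matrix n n ℝ) (hA : ∀ i j, 0 ≤ A i j) (a : ℝ)
    (hdlb : ∀ s, a < s → (s - a) ^ (Fintype.card n) ≤ |(s • (1 : Matrix n n ℝ) - A).det|)
    (hdet0 : (a • (1 : Matrix n n ℝ) - A).det = 0) :
    ∃ u : n → ℝ, (∀ i, 0 ≤ u i) ∧ u ≠ 0 ∧ A *ᵥ u = a • u := by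
  classical
  have hU : ∀ s, a < s → IsUnit ((s • (1 : Matrix n n ℝ) - A).det) := by
    intro s hs
    rw [isUnit_iff_ne_zero]
    intro h0
    have := hdlb s hs
    rw [h0, abs_zero] at this
    nlinarith [pow_pos (by linarith : (0:ℝ) < s - a) (Fintype.card n)]
  set t : ℕ → ℝ := fun k => a + ((k : ℝ) + 1)⁻¹ with htdef
  have htgt : ∀ k, a < t k := by
    intro k
    have : (0:ℝ) < ((k:ℝ)+1)⁻¹ := by positivity
    simp only [htdef]; linarith
  have htlim : Tendsto t atTop (𝓝 a) := by
    rw [htdef]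
    have h1 : Tendsto (fun k : ℕ => ((k : ℝ) + 1)⁻¹) atTop (𝓝 0) := by
      apply tendsto_inv_atTop_zero.comp
      exact tendsto_atTop_add_const_right atTop 1 tendsto_natCast_atTop_atTop
    simpa using h1.const_add a
  set R : ℕ → Matrix n n ℝ := fun k => (t k • (1 : Matrix n n ℝ) - A)⁻¹ with hRdef
  have hRnn : ∀ k i j, 0 ≤ R k i j := fun k => resolvent_nonneg A hA a hdlb (t k) (htgt k)
  have hRmul : ∀ k, (t k • (1 : Matrix n n ℝ) - A) * R k = 1 :=
    fun k => Matrix.mul_nonsing_inv _ (hU _ (htgt k))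
  set ones : n → ℝ := fun _ => 1 with honesdef
  set w : ℕ → n → ℝ := fun k => R k *ᵥ ones with hwdef
  have hwnn : ∀ k i, 0 ≤ w k i := by
    intro k i
    apply Finset.sum_nonneg
    intro l _
    exact mul_nonneg (hRnn k i l) zero_le_one
  set c : ℕ → ℝ := fun k => ∑ i, w k i with hcdef
  have hcnn : ∀ k, 0 ≤ c k := fun k => Finset.sum_nonneg fun i _ => hwnn k i
  have hwc : ∀ k i, w k i ≤ c k := fun k i =>
    Finset.single_le_sum (fun l _ => hwnn k l) (Finset.mem_univ i)
  have hRw : ∀ k i j, R k i j ≤ w k i := by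
    intro k i j
    have : w k i = ∑ l, R k i l * 1 := by
      simp only [hwdef, Matrix.mulVec, dotProduct, honesdef]
    rw [this]
    simpa using Finset.single_le_sum (f := fun l => R k i l * 1)
      (fun l _ => by simpa using hRnn k i l) (Finset.mem_univ j)
  have hcpos : ∀ k, 0 < c k := by
    intro k
    rcases lt_or_eq_of_le (hcnn k) with h | h
    · exact h
    · exfalso
      have hR0 : R k = 0 := by
        ext i j
        rw [Matrix.zero_apply]
        have h1 : w k i = 0 := le_antisymm (by rw [h]; exact hwc k i) (hwnn k i)
        exact le_antisymm (by rw [← h1]; exact hRw k i j) (hRnn k i j)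
      have := hRmul k
      rw [hR0, Matrix.mul_zero] at this
      obtain i := Classical.arbitrary n
      have := congrFun (congrFun this i) i
      simp [Matrix.one_apply] at this
  -- for every j there is k ≥ j with c k > j
  have hunbdd : ∀ jj : ℕ, ∃ k, jj ≤ k ∧ (jj : ℝ) < c k := by
    intro jj
    by_contra hcon
    push_neg at hcon
    -- then `R (k + jj)` all lie in a compact box
    set G : ℕ → (n → n → ℝ) := fun k i j => R (k + jj) i j with hGdef
    have hGmem : ∀ k, G k ∈ Set.Icc (0 : n → n → ℝ) (fun _ _ => (jj : ℝ)) := by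
      intro k
      constructor
      · intro i; intro j; exact hRnn _ i j
      · intro i; intro j
        exact le_trans (le_trans (hRw _ i j) (hwc _ i)) (hcon (k + jj) (Nat.le_add_left _ _))
    obtain ⟨L, _hL, φ, hφmono, hφlim⟩ :=
      (isCompact_Icc (a := (0 : n → n → ℝ)) (b := fun _ _ => (jj : ℝ))).tendsto_subseq hGmem
    set Lm : Matrix n n ℝ := Matrix.of L with hLmdef
    have hmullim : (a • (1 : Matrix n n ℝ) - A) * Lm = 1 := by
      ext i j
      have hentry : Tendsto (fun k => ((t (φ k + jj) • (1 : Matrix n n ℝ) - A) * R (φ k + jj)) i j)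
          atTop (𝓝 (((a • (1 : Matrix n n ℝ) - A) * Lm) i j)) := by
        simp only [Matrix.mul_apply, Matrix.sub_apply, Matrix.smul_apply, smul_eq_mul]
        apply tendsto_finset_sum
        intro l _
        apply Filter.Tendsto.mul
        · apply Filter.Tendsto.sub_const
          apply Filter.Tendsto.mul_const
          apply htlim.comp
          apply tendsto_atTop_mono (fun k => le_trans hφmono.le_apply (Nat.le_add_right _ _))
          exact tendsto_id
        · have := (tendsto_pi_nhds.mp (tendsto_pi_nhds.mp hφlim l)) j
          exact this
      have hconst : ∀ k, ((t (φ k + jj) • (1 : Matrix n n ℝ) - A) * R (φ k + jj)) i j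
          = (1 : Matrix n n ℝ) i j := fun k => by rw [hRmul]
      rw [tendsto_congr hconst] at hentry
      exact (tendsto_nhds_unique hentry tendsto_const_nhds)
    have hdet1 := congrArg Matrix.det hmullim
    rw [Matrix.det_mul, hdet0, zero_mul, Matrix.det_one] at hdet1
    exact zero_ne_one hdet1
  choose ψ hψge hψgt using hunbdd
  set u : ℕ → n → ℝ := fun k => (c k)⁻¹ • w k with hudef
  have husum : ∀ k, ∑ i, u k i = 1 := by
    intro k
    simp only [hudef, Pi.smul_apply, smul_eq_mul, ← Finset.mul_sum]
    exact inv_mul_cancel₀ (ne_of_gt (hcpos k))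
  have hunn : ∀ k i, 0 ≤ u k i := fun k i =>
    mul_nonneg (inv_nonneg.mpr (hcnn k)) (hwnn k i)
  -- the simplex is compact
  set S : Set (n → ℝ) := {x | (∀ i, 0 ≤ x i) ∧ ∑ i, x i = 1} with hSdef
  have hSsub : S ⊆ Set.Icc (0 : n → ℝ) (fun _ => 1) := by
    rintro x ⟨hx1, hx2⟩
    constructor
    · intro i; exact hx1 i
    · intro i
      calc x i ≤ ∑ l, x l := Finset.single_le_sum (fun l _ => hx1 l) (Finset.mem_univ i)
        _ = 1 := hx2
  have hSclosed : IsClosed S := by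
    have h1 : IsClosed {x : n → ℝ | ∀ i, 0 ≤ x i} := by
      rw [Set.setOf_forall]
      exact isClosed_iInter fun i => isClosed_le continuous_const (continuous_apply i)
    have h2 : IsClosed {x : n → ℝ | ∑ i, x i = 1} :=
      isClosed_eq (continuous_finset_sum _ fun i _ => continuous_apply i) continuous_const
    have h3 : S = {x : n → ℝ | ∀ i, 0 ≤ x i} ∩ {x : n → ℝ | ∑ i, x i = 1} := rfl
    rw [h3]; exact h1.inter h2
  have hScompact : IsCompact S :=
    (isCompact_Icc (a := (0 : n → ℝ)) (b := fun _ => 1)).of_isClosed_subset hSclosed hSsub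
  have humem : ∀ k, u (ψ k) ∈ S := fun k => ⟨hunn _, husum _⟩
  obtain ⟨uL, huLS, θ, hθmono, hθlim⟩ := hScompact.tendsto_subseq humem
  set g : ℕ → ℕ := fun j => ψ (θ j) with hgdef
  have hgge : ∀ j, j ≤ g j := fun j => le_trans hθmono.le_apply (hψge (θ j))
  have hcg : ∀ j : ℕ, (j : ℝ) ≤ c (g j) := by
    intro j
    have h1 := hψgt (θ j)
    have h2 : (j : ℝ) ≤ (θ j : ℝ) := Nat.cast_le.mpr hθmono.le_apply
    exact h2.trans h1.le
  -- the basic recurrence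
  have hrec : ∀ k, A *ᵥ u k = t k • u k - (c k)⁻¹ • ones := by
    intro k
    have h1 : (t k • (1 : Matrix n n ℝ) - A) *ᵥ w k = ones := by
      rw [hwdef]
      rw [Matrix.mulVec_mulVec, hRmul, Matrix.one_mulVec]
    have h2 : t k • w k - A *ᵥ w k = ones := by
      rw [← h1, Matrix.sub_mulVec, Matrix.smul_mulVec, Matrix.one_mulVec]
    have h3 : A *ᵥ w k = t k • w k - ones := by
      rw [← h2]; abel
    rw [hudef, Matrix.mulVec_smul, h3]
    ext i
    simp only [Pi.smul_apply, Pi.sub_apply, smul_eq_mul]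
    ring
  -- pass to the limit coordinatewise
  have hlimeq : A *ᵥ uL = a • uL := by
    funext i
    have hcoord : ∀ l, Tendsto (fun j => u (g j) l) atTop (𝓝 (uL l)) := by
      intro l
      exact tendsto_pi_nhds.mp hθlim l
    have hL : Tendsto (fun j => (A *ᵥ u (g j)) i) atTop (𝓝 ((A *ᵥ uL) i)) := by
      simp only [Matrix.mulVec, dotProduct]
      exact tendsto_finset_sum _ fun l _ => (hcoord l).const_mul _
    have htg : Tendsto (fun j => t (g j)) atTop (𝓝 a) :=
      htlim.comp (tendsto_atTop_mono hgge tendsto_id)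
    have hcinv : Tendsto (fun j => (c (g j))⁻¹) atTop (𝓝 0) := by
      apply squeeze_zero' (Filter.Eventually.of_forall fun j => inv_nonneg.mpr (hcnn _))
      · filter_upwards [Filter.eventually_ge_atTop 1] with j hj
        have hjpos : (0:ℝ) < (j:ℝ) := by exact_mod_cast hj
        exact inv_anti₀ hjpos (hcg j)
      · exact tendsto_inv_atTop_zero.comp tendsto_natCast_atTop_atTop
    have hR : Tendsto (fun j => (A *ᵥ u (g j)) i) atTop (𝓝 (a * uL i - 0 * 1)) := by
      have : ∀ j, (A *ᵥ u (g j)) i = t (g j) * u (g j) i - (c (g j))⁻¹ * 1 := by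
        intro j
        have := congrFun (hrec (g j)) i
        simpa [Pi.smul_apply, Pi.sub_apply, smul_eq_mul, honesdef] using this
      rw [tendsto_congr this]
      exact ((htg.mul (hcoord i)).sub (hcinv.mul tendsto_const_nhds))
    have := tendsto_nhds_unique hL hR
    simpa [Pi.smul_apply, smul_eq_mul] using this
  refine ⟨uL, huLS.1, ?_, hlimeq⟩
  intro h0
  have := huLS.2
  rw [h0] at this
  simp at this


end AuxGeneric

theorem inv_mulVec_eigen {p : Type*} [Fintype p] [DecidableEq p]
    (Ac : Matrix p p ℂ) (uc : p → ℂ) (a z : ℂ) (hu : Ac *ᵥ uc = a • uc)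
    (hza : IsUnit (z • (1 : Matrix p p ℂ) - Ac).det) (h1 : z ≠ a) :
    (z • (1 : Matrix p p ℂ) - Ac)⁻¹ *ᵥ uc = (z - a)⁻¹ • uc := by
  have hmv : (z • (1 : Matrix p p ℂ) - Ac) *ᵥ uc = (z - a) • uc := by
    rw [Matrix.sub_mulVec, Matrix.smul_mulVec, Matrix.one_mulVec, hu, sub_smul]
  have h3 : (z • (1 : Matrix p p ℂ) - Ac)⁻¹ *ᵥ ((z • (1 : Matrix p p ℂ) - Ac) *ᵥ uc) = uc := by
    rw [Matrix.mulVec_mulVec, Matrix.nonsing_inv_mul _ hza, Matrix.one_mulVec]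
  rw [hmv, Matrix.mulVec_smul] at h3
  have hz : z - a ≠ 0 := sub_ne_zero.mpr h1
  calc (z • (1 : Matrix p p ℂ) - Ac)⁻¹ *ᵥ uc
      = (z - a)⁻¹ • ((z - a) • ((z • (1 : Matrix p p ℂ) - Ac)⁻¹ *ᵥ uc)) := by
        rw [smul_smul, inv_mul_cancel₀ hz, one_smul]
    _ = (z - a)⁻¹ • uc := by rw [h3]

theorem key_det {p q : Type*} [Fintype p] [DecidableEq p] [Fintype q] [DecidableEq q]
    (Ac : Matrix p p ℂ) (Bc : Matrix q q ℂ) (uc : p → ℂ) (vc : q → ℂ) (a b ρ z : ℂ)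
    (hu : Ac *ᵥ uc = a • uc) (hv : Bc *ᵥ vc = b • vc)
    (huu : uc ⬝ᵥ uc = 1) (hvv : vc ⬝ᵥ vc = 1)
    (hza : IsUnit (z • (1 : Matrix p p ℂ) - Ac).det)
    (hzb : IsUnit (z • (1 : Matrix q q ℂ) - Bc).det)
    (h1 : z ≠ a) (h2 : z ≠ b) :
    (z • (1 : Matrix (p ⊕ q) (p ⊕ q) ℂ) -
      fromBlocks Ac (ρ • vecMulVec uc vc) (ρ • vecMulVec vc uc) Bc).det =
    (z • (1 : Matrix p p ℂ) - Ac).det * (z • (1 : Matrix q q ℂ) - Bc).det *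
      (1 - ρ ^ 2 * ((z - a)⁻¹ * (z - b)⁻¹)) := by
  classical
  set W := (z • (1 : Matrix p p ℂ) - Ac)⁻¹ with hWdef
  set M := (z • (1 : Matrix q q ℂ) - Bc) with hMdef
  have hblock : z • (1 : Matrix (p ⊕ q) (p ⊕ q) ℂ) -
      fromBlocks Ac (ρ • vecMulVec uc vc) (ρ • vecMulVec vc uc) Bc =
      fromBlocks (z • (1 : Matrix p p ℂ) - Ac) (-(ρ • vecMulVec uc vc))
        (-(ρ • vecMulVec vc uc)) M := by
    rw [← fromBlocks_one, Matrix.fromBlocks_smul]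
    ext (i | i) (j | j) <;>
      simp [Matrix.sub_apply, Matrix.fromBlocks, Matrix.neg_apply, hMdef]
  haveI : Invertible (z • (1 : Matrix p p ℂ) - Ac) := (z • 1 - Ac).invertibleOfIsUnitDet hza
  rw [hblock, Matrix.det_fromBlocks₁₁, invOf_eq_nonsing_inv]
  have hWu : W *ᵥ uc = (z - a)⁻¹ • uc := inv_mulVec_eigen Ac uc a z hu hza h1
  have hWu' : ∀ k, (∑ l, W k l * uc l) = (z - a)⁻¹ * uc k := by
    intro k
    have := congrFun hWu k
    simpa [Matrix.mulVec, dotProduct] using this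
  have hCWB : (-(ρ • vecMulVec vc uc)) * W * (-(ρ • vecMulVec uc vc)) =
      (ρ ^ 2 * (z - a)⁻¹) • vecMulVec vc vc := by
    ext i j
    simp only [Matrix.mul_apply, Matrix.neg_apply, Matrix.smul_apply, Matrix.vecMulVec_apply,
      smul_eq_mul]
    calc ∑ l, (∑ k, -(ρ * (vc i * uc k)) * W k l) * -(ρ * (uc l * vc j))
        = ∑ l, ∑ k, (ρ ^ 2 * (vc i * vc j)) * (uc k * (W k l * uc l)) := by
          apply Finset.sum_congr rfl
          intro l _
          rw [Finset.sum_mul]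
          apply Finset.sum_congr rfl
          intro k _
          ring
      _ = (ρ ^ 2 * (vc i * vc j)) * ∑ k, uc k * (∑ l, W k l * uc l) := by
          rw [Finset.sum_comm, Finset.mul_sum]
          apply Finset.sum_congr rfl
          intro k _
          rw [Finset.mul_sum, Finset.mul_sum]
      _ = ρ ^ 2 * (z - a)⁻¹ * (vc i * vc j) := by
          simp only [hWu']
          have h5 : ∑ k, uc k * ((z - a)⁻¹ * uc k) = (z - a)⁻¹ * (uc ⬝ᵥ uc) := by
            rw [dotProduct, Finset.mul_sum]
            apply Finset.sum_congr rfl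
            intro k _
            ring
          rw [h5, huu, mul_one]
          ring
  rw [hCWB]
  -- matrix determinant lemma for the remaining block
  set cc := ρ ^ 2 * (z - a)⁻¹ with hccdef
  have hMv : ∀ k, (∑ l, M⁻¹ k l * vc l) = (z - b)⁻¹ * vc k := by
    intro k
    have := congrFun (inv_mulVec_eigen Bc vc b z hv hzb h2) k
    simpa [Matrix.mulVec, dotProduct, hMdef] using this
  have hsplit : M - cc • vecMulVec vc vc =
      M + Matrix.replicateCol Unit ((-cc) • vc) * Matrix.replicateRow Unit vc := by
    rw [← Matrix.vecMulVec_eq]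
    ext i j
    simp only [Matrix.sub_apply, Matrix.add_apply, Matrix.smul_apply, Matrix.vecMulVec_apply,
      Pi.smul_apply, smul_eq_mul]
    ring
  rw [hsplit, Matrix.det_add_replicateCol_mul_replicateRow hzb]
  have hdet1 : (1 + Matrix.replicateRow Unit vc * M⁻¹ * Matrix.replicateCol Unit ((-cc) • vc)).det =
      1 - cc * (z - b)⁻¹ := by
    rw [Matrix.det_unique]
    simp only [Matrix.add_apply, Matrix.one_apply_eq, Matrix.mul_apply, Matrix.replicateRow_apply,
      Matrix.replicateCol_apply, Pi.smul_apply, smul_eq_mul]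
    have h6 : ∀ x, ∑ l, (vc x * M⁻¹ x l) * (-cc * vc l) = (vc x * -cc) * ((z - b)⁻¹ * vc x) := by
      intro x
      rw [← hMv x, Finset.mul_sum]
      apply Finset.sum_congr rfl
      intro l _
      ring
    simp only [Finset.sum_mul]
    rw [Finset.sum_comm]
    simp only [h6]
    have h7 : ∑ x, (vc x * -cc) * ((z - b)⁻¹ * vc x) = -cc * ((z - b)⁻¹ * (vc ⬝ᵥ vc)) := by
      simp only [dotProduct, Finset.mul_sum]
      apply Finset.sum_congr rfl
      intro k _
      ring
    rw [h7, hvv, mul_one]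
    ring
  rw [hdet1, hccdef]
  ring

theorem map_smul_one_sub (A : Matrix (Fin n) (Fin n) ℝ) (t : ℝ) :
    (t • (1 : Matrix (Fin n) (Fin n) ℝ) - A).map Complex.ofReal
      = (t : ℂ) • (1 : Matrix (Fin n) (Fin n) ℂ) - A.map Complex.ofReal := by
  ext i j
  by_cases h : i = j <;>
    simp [Matrix.map_apply, Matrix.sub_apply, Matrix.smul_apply, Matrix.one_apply, h]

theorem realizable_package (n : ℕ) (hn : 0 < n) (α : Fin n → ℂ) (a : ℝ)
    (hα0 : α ⟨0, hn⟩ = (a : ℂ)) (hαp : ∀ i, ‖α i‖ ≤ a) (hA : Realizable α) :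
    ∃ A : Matrix (Fin n) (Fin n) ℝ, (∀ i j, 0 ≤ A i j) ∧
      (∀ z : ℂ, (z • (1 : Matrix (Fin n) (Fin n) ℂ) - A.map Complex.ofReal).det
        = ∏ i, (z - α i)) ∧
      ∃ u : Fin n → ℝ, (∀ i, 0 ≤ u i) ∧ u ⬝ᵥ u = 1 ∧ A *ᵥ u = a • u := by
  obtain ⟨A, hAnn, hAcp⟩ := hA
  haveI : Nonempty (Fin n) := ⟨⟨0, hn⟩⟩
  have ha0 : 0 ≤ a := le_trans (norm_nonneg _) (hαp ⟨0, hn⟩)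
  set Ac := A.map Complex.ofReal with hAcdef
  have hdetC : ∀ z : ℂ, (z • (1 : Matrix (Fin n) (Fin n) ℂ) - Ac).det = ∏ i, (z - α i) := by
    intro z
    rw [← eval_charpoly', hAcp]
    simp [eval_prod]
  refine ⟨A, hAnn, hdetC, ?_⟩
  -- cast determinants
  have hcast : ∀ t : ℝ, (((t • (1 : Matrix (Fin n) (Fin n) ℝ) - A).det : ℝ) : ℂ)
      = ∏ i, ((t : ℂ) - α i) := by
    intro t
    rw [← hdetC (t : ℂ), ← map_smul_one_sub A t, ← Complex.ofRealHom_eq_coe, RingHom.map_det]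
    rfl
  have hdlb : ∀ s, a < s →
      (s - a) ^ (Fintype.card (Fin n)) ≤ |(s • (1 : Matrix (Fin n) (Fin n) ℝ) - A).det| := by
    intro s hs
    have h1 : |(s • (1 : Matrix (Fin n) (Fin n) ℝ) - A).det|
        = ∏ i, ‖(s : ℂ) - α i‖ := by
      rw [← Real.norm_eq_abs, ← Complex.norm_real, hcast s, norm_prod]
    rw [h1, Fintype.card_fin]
    have h2 : ∀ i : Fin n, s - a ≤ ‖(s : ℂ) - α i‖ := by
      intro i
      have h3 := norm_sub_norm_le (s : ℂ) (α i)
      rw [Complex.norm_real, Real.norm_eq_abs, abs_of_nonneg (by linarith : (0:ℝ) ≤ s)] at h3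
      linarith [hαp i]
    calc (s - a) ^ n = ∏ _i : Fin n, (s - a) := by rw [Finset.prod_const, card_univ]; simp
      _ ≤ ∏ i, ‖(s : ℂ) - α i‖ :=
          Finset.prod_le_prod (fun i _ => by linarith) (fun i _ => h2 i)
  have hdet0 : (a • (1 : Matrix (Fin n) (Fin n) ℝ) - A).det = 0 := by
    have h1 := hcast a
    have h2 : ∏ i, ((a : ℂ) - α i) = 0 :=
      Finset.prod_eq_zero (Finset.mem_univ ⟨0, hn⟩) (by rw [hα0, sub_self])
    rw [h2] at h1
    exact_mod_cast h1
  obtain ⟨u0, hu0nn, hu0ne, hu0eig⟩ := perron_exists A hAnn a hdlb hdet0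
  -- normalize
  have hdot : 0 < u0 ⬝ᵥ u0 := by
    obtain ⟨i, hi⟩ := Function.ne_iff.mp hu0ne
    have hipos : 0 < u0 i := lt_of_le_of_ne (hu0nn i) (by simpa using (Ne.symm hi))
    calc (0:ℝ) < u0 i * u0 i := mul_pos hipos hipos
      _ ≤ ∑ l, u0 l * u0 l :=
        Finset.single_le_sum (fun l _ => mul_self_nonneg (u0 l)) (Finset.mem_univ i)
      _ = u0 ⬝ᵥ u0 := rfl
  set s := Real.sqrt (u0 ⬝ᵥ u0) with hsdef
  have hspos : 0 < s := Real.sqrt_pos.mpr hdot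
  have hs2 : s ^ 2 = u0 ⬝ᵥ u0 := Real.sq_sqrt (le_of_lt hdot)
  refine ⟨s⁻¹ • u0, fun i => mul_nonneg (inv_nonneg.mpr hspos.le) (hu0nn i), ?_, ?_⟩
  · rw [smul_dotProduct, dotProduct_smul]
    field_simp
    rw [← hs2]
    simp only [smul_eq_mul]
    field_simp
  · rw [Matrix.mulVec_smul, hu0eig, smul_comm]

/-- If `(α_1, …, α_n)` and `(β_1, …, β_m)` are realizable (with Perron eigenvalues
`α_1`, `β_1`), then for any `ε ≥ max (β_1 - α_1) 0` the list
`(α_1 + ε, β_1 - ε, α_2, …, α_n, β_2, …, β_m)` is realizable. -/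
theorem realizable_join (n m : ℕ) (hn : 0 < n) (hm : 0 < m)
    (α : Fin n → ℂ) (β : Fin m → ℂ)
    (hα1 : (α ⟨0, hn⟩).im = 0) (hβ1 : (β ⟨0, hm⟩).im = 0)
    (hαp : ∀ i, ‖α i‖ ≤ (α ⟨0, hn⟩).re)
    (hβp : ∀ j, ‖β j‖ ≤ (β ⟨0, hm⟩).re)
    (hA : Realizable α) (hB : Realizable β)
    (ε : ℝ) (hε : max ((β ⟨0, hm⟩).re - (α ⟨0, hn⟩).re) 0 ≤ ε) :
    Realizable (Fin.append (Function.update α ⟨0, hn⟩ (α ⟨0, hn⟩ + (ε : ℂ)))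
      (Function.update β ⟨0, hm⟩ (β ⟨0, hm⟩ - (ε : ℂ)))) := by
  classical
  have hε0 : 0 ≤ ε := le_trans (le_max_right _ _) hε
  set a := (α ⟨0, hn⟩).re with hadef
  set b := (β ⟨0, hm⟩).re with hbdef
  have hεba : b - a ≤ ε := le_trans (le_max_left _ _) hε
  have hα0 : α ⟨0, hn⟩ = (a : ℂ) := by
    apply Complex.ext <;> simp [hα1, hadef]
  have hβ0 : β ⟨0, hm⟩ = (b : ℂ) := by
    apply Complex.ext <;> simp [hβ1, hbdef]
  have ha0 : 0 ≤ a := le_trans (norm_nonneg _) (hαp ⟨0, hn⟩)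
  have hb0 : 0 ≤ b := le_trans (norm_nonneg _) (hβp ⟨0, hm⟩)
  obtain ⟨A, hAnn, hdetA, u, hunn, huu, hAu⟩ := realizable_package n hn α a hα0 hαp hA
  obtain ⟨B, hBnn, hdetB, v, hvnn, hvv, hBv⟩ := realizable_package m hm β b hβ0 hβp hB
  set ρ := Real.sqrt (ε * (ε + a - b)) with hρdef
  have hρ0 : 0 ≤ ρ := Real.sqrt_nonneg _
  have hρ2 : ρ ^ 2 = ε * (ε + a - b) := Real.sq_sqrt (mul_nonneg hε0 (by linarith))
  set Cb : Matrix (Fin n ⊕ Fin m) (Fin n ⊕ Fin m) ℝ :=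
    fromBlocks A (ρ • vecMulVec u v) (ρ • vecMulVec v u) B with hCbdef
  refine ⟨(Matrix.reindex finSumFinEquiv finSumFinEquiv) Cb, ?_, ?_⟩
  · intro i j
    rw [Matrix.reindex_apply, Matrix.submatrix_apply]
    set i' := finSumFinEquiv.symm i with hi'
    set j' := finSumFinEquiv.symm j with hj'
    clear_value i' j'
    rcases i' with i' | i' <;> rcases j' with j' | j' <;>
      simp only [hCbdef, Matrix.fromBlocks_apply₁₁, Matrix.fromBlocks_apply₁₂,
        Matrix.fromBlocks_apply₂₁, Matrix.fromBlocks_apply₂₂, Matrix.smul_apply,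
        Matrix.vecMulVec_apply, smul_eq_mul]
    · exact hAnn i' j'
    · exact mul_nonneg hρ0 (mul_nonneg (hunn i') (hvnn j'))
    · exact mul_nonneg hρ0 (mul_nonneg (hvnn i') (hunn j'))
    · exact hBnn i' j'
  · -- the characteristic polynomial computation
    set uc : Fin n → ℂ := fun i => ((u i : ℝ) : ℂ) with hucdef
    set vc : Fin m → ℂ := fun j => ((v j : ℝ) : ℂ) with hvcdef
    set Ac := A.map Complex.ofReal with hAcdef
    set Bc := B.map Complex.ofReal with hBcdef
    have hmap : ((Matrix.reindex finSumFinEquiv finSumFinEquiv) Cb).map Complex.ofReal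
        = (Matrix.reindex finSumFinEquiv finSumFinEquiv) (Cb.map Complex.ofReal) := by
      ext i j
      simp [Matrix.reindex_apply, Matrix.submatrix_apply, Matrix.map_apply]
    rw [hmap, Matrix.charpoly_reindex]
    rw [← Equiv.prod_comp finSumFinEquiv
      (fun k => (X : ℂ[X]) - C (Fin.append (Function.update α ⟨0, hn⟩ (α ⟨0, hn⟩ + (ε : ℂ)))
        (Function.update β ⟨0, hm⟩ (β ⟨0, hm⟩ - (ε : ℂ))) k))]
    rw [Fintype.prod_sum_type]
    simp only [finSumFinEquiv_apply_left, finSumFinEquiv_apply_right, Fin.append_left,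
      Fin.append_right]
    have hUmap : (ρ • vecMulVec u v).map Complex.ofReal = (((ρ:ℝ):ℂ)) • vecMulVec uc vc := by
      ext i j
      simp only [Matrix.map_apply, Matrix.smul_apply, Matrix.vecMulVec_apply, smul_eq_mul,
        hucdef, hvcdef]
      push_cast
      ring
    have hVmap : (ρ • vecMulVec v u).map Complex.ofReal = (((ρ:ℝ):ℂ)) • vecMulVec vc uc := by
      ext i j
      simp only [Matrix.map_apply, Matrix.smul_apply, Matrix.vecMulVec_apply, smul_eq_mul,
        hucdef, hvcdef]
      push_cast
      ring
    have hCbmap : Cb.map Complex.ofReal =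
        fromBlocks Ac (((ρ:ℝ):ℂ) • vecMulVec uc vc) (((ρ:ℝ):ℂ) • vecMulVec vc uc) Bc := by
      rw [hCbdef, Matrix.fromBlocks_map, hUmap, hVmap]
    rw [hCbmap]
    -- complex eigenvector equations
    have hucEig : Ac *ᵥ uc = ((a:ℝ):ℂ) • uc := by
      funext i
      have h1 := congrFun hAu i
      simp only [Matrix.mulVec, dotProduct, Pi.smul_apply, smul_eq_mul] at h1
      simp only [Matrix.mulVec, dotProduct, Pi.smul_apply, smul_eq_mul, hAcdef, hucdef,
        Matrix.map_apply]
      exact_mod_cast h1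
    have hvcEig : Bc *ᵥ vc = ((b:ℝ):ℂ) • vc := by
      funext i
      have h1 := congrFun hBv i
      simp only [Matrix.mulVec, dotProduct, Pi.smul_apply, smul_eq_mul] at h1
      simp only [Matrix.mulVec, dotProduct, Pi.smul_apply, smul_eq_mul, hBcdef, hvcdef,
        Matrix.map_apply]
      exact_mod_cast h1
    have hucuc : uc ⬝ᵥ uc = 1 := by
      simp only [dotProduct, hucdef]
      exact_mod_cast huu
    have hvcvc : vc ⬝ᵥ vc = 1 := by
      simp only [dotProduct, hvcdef]
      exact_mod_cast hvv
    apply Polynomial.eq_of_infinite_eval_eq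
    apply Set.Infinite.mono (s := (fun t : ℝ => (t : ℂ)) '' Set.Ioi (|a| + |b| + 1))
    swap
    · apply Set.Infinite.image
      · intro x _ y _ hxy
        exact Complex.ofReal_inj.mp hxy
      · exact Set.Ioi_infinite _
    rintro z ⟨t, ht, rfl⟩
    rw [Set.mem_Ioi] at ht
    have hta : a < t := by
      have := le_abs_self a
      have := abs_nonneg b
      linarith
    have htb : b < t := by
      have := le_abs_self b
      have := abs_nonneg a
      linarith
    have htpos : 0 < t := by
      have := abs_nonneg a; have := abs_nonneg b; linarith
    set z := ((t:ℝ):ℂ) with hzdef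
    have habsz : ‖z‖ = t := by
      rw [hzdef, Complex.norm_real, Real.norm_eq_abs, abs_of_pos htpos]
    have hdza : (z • (1 : Matrix (Fin n) (Fin n) ℂ) - Ac).det ≠ 0 := by
      rw [hdetA z]
      apply Finset.prod_ne_zero_iff.mpr
      intro i _
      apply sub_ne_zero.mpr
      intro h
      have := hαp i
      rw [← h, habsz] at this
      have := le_abs_self a
      linarith
    have hdzb : (z • (1 : Matrix (Fin m) (Fin m) ℂ) - Bc).det ≠ 0 := by
      rw [hdetB z]
      apply Finset.prod_ne_zero_iff.mpr
      intro i _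
      apply sub_ne_zero.mpr
      intro h
      have := hβp i
      rw [← h, habsz] at this
      have := le_abs_self b
      linarith
    have hzna : z ≠ ((a:ℝ):ℂ) := by
      intro h
      rw [hzdef] at h
      exact (ne_of_gt hta) (Complex.ofReal_inj.mp h)
    have hznb : z ≠ ((b:ℝ):ℂ) := by
      intro h
      rw [hzdef] at h
      exact (ne_of_gt htb) (Complex.ofReal_inj.mp h)
    simp only [Set.mem_setOf_eq]
    rw [eval_charpoly']
    rw [key_det Ac Bc uc vc ((a:ℝ):ℂ) ((b:ℝ):ℂ) (((ρ:ℝ):ℂ)) z hucEig hvcEig hucuc hvcvc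
      (isUnit_iff_ne_zero.mpr hdza) (isUnit_iff_ne_zero.mpr hdzb) hzna hznb]
    simp only [eval_mul, eval_prod, eval_sub, eval_X, eval_C]
    rw [hdetA z, hdetB z]
    -- split off the Perron roots
    have hPA : ∏ i, (z - α i) = (z - (a:ℂ)) * ∏ i ∈ univ.erase ⟨0, hn⟩, (z - α i) := by
      rw [← Finset.mul_prod_erase univ _ (Finset.mem_univ ⟨0, hn⟩), hα0]
    have hPB : ∏ i, (z - β i) = (z - (b:ℂ)) * ∏ i ∈ univ.erase ⟨0, hm⟩, (z - β i) := by
      rw [← Finset.mul_prod_erase univ _ (Finset.mem_univ ⟨0, hm⟩), hβ0]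
    have hGA : ∏ i, (z - (Function.update α ⟨0, hn⟩ (α ⟨0, hn⟩ + (ε : ℂ)) i))
        = (z - ((a:ℂ) + ε)) * ∏ i ∈ univ.erase ⟨0, hn⟩, (z - α i) := by
      rw [← Finset.mul_prod_erase univ _ (Finset.mem_univ ⟨0, hn⟩), Function.update_self, hα0]
      congr 1
      apply Finset.prod_congr rfl
      intro i hi
      rw [Function.update_of_ne (Finset.ne_of_mem_erase hi)]
    have hGB : ∏ i, (z - (Function.update β ⟨0, hm⟩ (β ⟨0, hm⟩ - (ε : ℂ)) i))
        = (z - ((b:ℂ) - ε)) * ∏ i ∈ univ.erase ⟨0, hm⟩, (z - β i) := by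
      rw [← Finset.mul_prod_erase univ _ (Finset.mem_univ ⟨0, hm⟩), Function.update_self, hβ0]
      congr 1
      apply Finset.prod_congr rfl
      intro i hi
      rw [Function.update_of_ne (Finset.ne_of_mem_erase hi)]
    rw [hPA, hPB, hGA, hGB]
    have hρ2C : (((ρ:ℝ):ℂ)) ^ 2 = (ε:ℂ) * ((ε:ℂ) + (a:ℂ) - (b:ℂ)) := by
      exact_mod_cast congrArg Complex.ofReal hρ2
    have hza' : z - ((a:ℝ):ℂ) ≠ 0 := sub_ne_zero.mpr hzna
    have hzb' : z - ((b:ℝ):ℂ) ≠ 0 := sub_ne_zero.mpr hznb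
    set Pa := ∏ i ∈ univ.erase (⟨0, hn⟩ : Fin n), (z - α i) with hPadef
    set Pb := ∏ i ∈ univ.erase (⟨0, hm⟩ : Fin m), (z - β i) with hPbdef
    have hinv : (z - ((a:ℝ):ℂ))⁻¹ * (z - ((b:ℝ):ℂ))⁻¹ * ((z - ((a:ℝ):ℂ)) * (z - ((b:ℝ):ℂ))) = 1 := by
      rw [mul_mul_mul_comm, inv_mul_cancel₀ hza', inv_mul_cancel₀ hzb', one_mul]
    linear_combination (-(Pa * Pb * ((ρ:ℝ):ℂ) ^ 2)) * hinv - (Pa * Pb) * hρ2C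
end

section
/- (Improved Guo bound) Let n ≥ 2 and let Λ' = (λ_2, …, λ_n) be a list of complex numbers that is closed under complex conjugation (the multiset {λ_2, …, λ_n} equals the multiset of its conjugates). Set m = max_{2 ≤ j ≤ n} |λ_j|. Then the list ((n−1)·m, λ_2, …, λ_n) is realizable; consequently, the Guo index λ_0 of Λ' (the minimal λ such that (λ, λ_2, …, λ_n) is realizable) satisfies λ_0 ≤ (n−1)·max_{2 ≤ j ≤ n} |λ_j|. -/
open Polynomial Matrix Finset

lemma sqrt_cs {a b c d : ℝ} (ha : 0 ≤ a) (hb : 0 ≤ b) (hc : 0 ≤ c) (hd : 0 ≤ d) :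
    Real.sqrt a * Real.sqrt b + Real.sqrt c * Real.sqrt d
      ≤ Real.sqrt (a + c) * Real.sqrt (b + d) := by
  have h1 : 0 ≤ Real.sqrt a * Real.sqrt b + Real.sqrt c * Real.sqrt d := by positivity
  have h2 : 0 ≤ Real.sqrt (a + c) * Real.sqrt (b + d) := by positivity
  have key : (Real.sqrt a * Real.sqrt b + Real.sqrt c * Real.sqrt d) ^ 2
      ≤ (Real.sqrt (a + c) * Real.sqrt (b + d)) ^ 2 := by
    have e1 : Real.sqrt a ^ 2 = a := Real.sq_sqrt ha
    have e2 : Real.sqrt b ^ 2 = b := Real.sq_sqrt hb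
    have e3 : Real.sqrt c ^ 2 = c := Real.sq_sqrt hc
    have e4 : Real.sqrt d ^ 2 = d := Real.sq_sqrt hd
    have e5 : Real.sqrt (a + c) ^ 2 = a + c := Real.sq_sqrt (by linarith)
    have e6 : Real.sqrt (b + d) ^ 2 = b + d := Real.sq_sqrt (by linarith)
    have key2 : (Real.sqrt a * Real.sqrt d - Real.sqrt c * Real.sqrt b) ^ 2 ≥ 0 :=
      sq_nonneg _
    nlinarith [sq_nonneg (Real.sqrt a), sq_nonneg (Real.sqrt b), sq_nonneg (Real.sqrt c),
      sq_nonneg (Real.sqrt d)]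
  calc Real.sqrt a * Real.sqrt b + Real.sqrt c * Real.sqrt d
      = Real.sqrt ((Real.sqrt a * Real.sqrt b + Real.sqrt c * Real.sqrt d) ^ 2) :=
        (Real.sqrt_sq h1).symm
    _ ≤ Real.sqrt ((Real.sqrt (a + c) * Real.sqrt (b + d)) ^ 2) := Real.sqrt_le_sqrt key
    _ = _ := Real.sqrt_sq h2

/-- `B` is a good realization: right charpoly (over ℂ) and bilinear-contraction bound `m`. -/
def GoodMat (m : ℝ) {N : Type} [Fintype N] [DecidableEq N] (B : Matrix N N ℝ)
    (P : Polynomial ℂ) : Prop :=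
  (B.map (Complex.ofReal)).charpoly = P ∧
  ∀ x y : N → ℝ, |x ⬝ᵥ B *ᵥ y| ≤ m * Real.sqrt (x ⬝ᵥ x) * Real.sqrt (y ⬝ᵥ y)

lemma dot_reindex {N N' : Type} [Fintype N] [DecidableEq N] [Fintype N'] [DecidableEq N']
    (e : N ≃ N') (B : Matrix N N ℝ) (x y : N' → ℝ) :
    x ⬝ᵥ (reindex e e B) *ᵥ y = (x ∘ e) ⬝ᵥ B *ᵥ (y ∘ e) := by
  simp only [dotProduct, mulVec, reindex_apply, submatrix_apply]
  rw [← Equiv.sum_comp e (fun i => x i * ∑ j, B (e.symm i) (e.symm j) * y j)]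
  simp only [Equiv.symm_apply_apply, Function.comp_apply]
  refine Finset.sum_congr rfl fun i _ => ?_
  congr 1
  rw [← Equiv.sum_comp e (fun j => B i (e.symm j) * y j)]
  simp

lemma dot_self_reindex {N N' : Type} [Fintype N] [Fintype N']
    (e : N ≃ N') (x : N' → ℝ) : (x ∘ e) ⬝ᵥ (x ∘ e) = x ⬝ᵥ x := by
  simp only [dotProduct, Function.comp_apply]
  exact Equiv.sum_comp e (fun i => x i * x i)

lemma goodMat_reindex {m : ℝ} {N N' : Type} [Fintype N] [DecidableEq N] [Fintype N']
    [DecidableEq N'] (e : N ≃ N') {B : Matrix N N ℝ} {P : Polynomial ℂ}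
    (h : GoodMat m B P) : GoodMat m (reindex e e B) P := by
  obtain ⟨h1, h2⟩ := h
  constructor
  · rw [show (reindex e e B).map Complex.ofReal = reindex e e (B.map Complex.ofReal) by rfl,
      charpoly_reindex]
    exact h1
  · intro x y
    rw [dot_reindex, ← dot_self_reindex e x, ← dot_self_reindex e y]
    exact h2 _ _

lemma dps {N : Type} [Fintype N] (v : N → ℝ) : 0 ≤ v ⬝ᵥ v :=
  Finset.sum_nonneg fun i _ => mul_self_nonneg (v i)

lemma goodMat_fromBlocks {m : ℝ} (hm : 0 ≤ m) {N1 N2 : Type} [Fintype N1] [DecidableEq N1]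
    [Fintype N2] [DecidableEq N2] {B1 : Matrix N1 N1 ℝ} {B2 : Matrix N2 N2 ℝ}
    {P1 P2 : Polynomial ℂ} (h1 : GoodMat m B1 P1) (h2 : GoodMat m B2 P2) :
    GoodMat m (fromBlocks B1 0 0 B2) (P1 * P2) := by
  constructor
  · rw [show (fromBlocks B1 0 0 B2).map Complex.ofReal
        = fromBlocks (B1.map Complex.ofReal) 0 0 (B2.map Complex.ofReal) by
      simp [fromBlocks_map], charpoly_fromBlocks_zero₂₁, h1.1, h2.1]
  · intro x y
    have hx : x = Sum.elim (x ∘ Sum.inl) (x ∘ Sum.inr) := (Sum.elim_comp_inl_inr x).symm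
    have hy : y = Sum.elim (y ∘ Sum.inl) (y ∘ Sum.inr) := (Sum.elim_comp_inl_inr y).symm
    rw [hx, hy, fromBlocks_mulVec]
    simp only [Matrix.zero_mulVec, add_zero, zero_add]
    rw [sumElim_dotProduct_sumElim, sumElim_dotProduct_sumElim,
      sumElim_dotProduct_sumElim]
    calc |(x ∘ Sum.inl) ⬝ᵥ B1 *ᵥ (y ∘ Sum.inl) + (x ∘ Sum.inr) ⬝ᵥ B2 *ᵥ (y ∘ Sum.inr)|
        ≤ |(x ∘ Sum.inl) ⬝ᵥ B1 *ᵥ (y ∘ Sum.inl)| + |(x ∘ Sum.inr) ⬝ᵥ B2 *ᵥ (y ∘ Sum.inr)| :=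
          abs_add_le _ _
      _ ≤ m * Real.sqrt ((x ∘ Sum.inl) ⬝ᵥ (x ∘ Sum.inl)) * Real.sqrt ((y ∘ Sum.inl) ⬝ᵥ (y ∘ Sum.inl))
          + m * Real.sqrt ((x ∘ Sum.inr) ⬝ᵥ (x ∘ Sum.inr)) * Real.sqrt ((y ∘ Sum.inr) ⬝ᵥ (y ∘ Sum.inr)) :=
          add_le_add (h1.2 _ _) (h2.2 _ _)
      _ ≤ m * Real.sqrt ((x ∘ Sum.inl) ⬝ᵥ (x ∘ Sum.inl) + (x ∘ Sum.inr) ⬝ᵥ (x ∘ Sum.inr))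
          * Real.sqrt ((y ∘ Sum.inl) ⬝ᵥ (y ∘ Sum.inl) + (y ∘ Sum.inr) ⬝ᵥ (y ∘ Sum.inr)) := by
          have := sqrt_cs (dps (x ∘ Sum.inl)) (dps (y ∘ Sum.inl))
            (dps (x ∘ Sum.inr)) (dps (y ∘ Sum.inr))
          calc m * Real.sqrt ((x ∘ Sum.inl) ⬝ᵥ (x ∘ Sum.inl)) * Real.sqrt ((y ∘ Sum.inl) ⬝ᵥ (y ∘ Sum.inl))
              + m * Real.sqrt ((x ∘ Sum.inr) ⬝ᵥ (x ∘ Sum.inr)) * Real.sqrt ((y ∘ Sum.inr) ⬝ᵥ (y ∘ Sum.inr))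
              = m * (Real.sqrt ((x ∘ Sum.inl) ⬝ᵥ (x ∘ Sum.inl)) * Real.sqrt ((y ∘ Sum.inl) ⬝ᵥ (y ∘ Sum.inl))
                + Real.sqrt ((x ∘ Sum.inr) ⬝ᵥ (x ∘ Sum.inr)) * Real.sqrt ((y ∘ Sum.inr) ⬝ᵥ (y ∘ Sum.inr))) := by ring
            _ ≤ _ := by rw [mul_assoc]; exact mul_le_mul_of_nonneg_left this hm

lemma abs_le_sqrt_mul {L m X Y : ℝ} (hm : 0 ≤ m) (hX : 0 ≤ X)
    (h : L ^ 2 ≤ m ^ 2 * X * Y) : |L| ≤ m * Real.sqrt X * Real.sqrt Y := by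
  have : |L| = Real.sqrt (L ^ 2) := (Real.sqrt_sq_eq_abs L).symm
  rw [this]
  have h2 : m * Real.sqrt X * Real.sqrt Y = Real.sqrt (m ^ 2 * X * Y) := by
    rw [Real.sqrt_mul (by positivity), Real.sqrt_mul (by positivity), Real.sqrt_sq hm]
  rw [h2]
  exact Real.sqrt_le_sqrt h

lemma goodMat_one {m : ℝ} (z : ℂ) (him : z.im = 0) (habs : ‖z‖ ≤ m) :
    GoodMat m (Matrix.of fun _ _ : Fin 1 => z.re) (X - C z) := by
  have hre : |z.re| ≤ m := by
    calc |z.re| ≤ ‖z‖ := Complex.abs_re_le_norm z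
    _ ≤ m := habs
  have hm : 0 ≤ m := le_trans (abs_nonneg _) hre
  have hzre : ((z.re : ℝ) : ℂ) = z := Complex.ext (by simp) (by simp [him])
  constructor
  · rw [Matrix.charpoly, Matrix.det_fin_one, charmatrix_apply_eq]
    congr 1
    simp only [Matrix.map_apply, Matrix.of_apply]
    exact congrArg C hzre
  · intro x y
    have hL : x ⬝ᵥ (Matrix.of fun _ _ : Fin 1 => z.re) *ᵥ y = x 0 * (z.re * y 0) := by
      simp [dotProduct, mulVec, Fin.sum_univ_one]
    rw [hL]
    apply abs_le_sqrt_mul hm (dps x)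
    have hx : x ⬝ᵥ x = x 0 * x 0 := by simp [dotProduct]
    have hy : y ⬝ᵥ y = y 0 * y 0 := by simp [dotProduct]
    have hr2 : z.re ^ 2 ≤ m ^ 2 := by nlinarith [sq_abs z.re, abs_nonneg z.re]
    rw [hx, hy]
    nlinarith [hr2, sq_nonneg (x 0 * y 0)]

lemma goodMat_two {m : ℝ} (z : ℂ) (habs : ‖z‖ ≤ m) :
    GoodMat m !![z.re, -z.im; z.im, z.re] ((X - C z) * (X - C (starRingEnd ℂ z))) := by
  have hm : 0 ≤ m := le_trans (norm_nonneg z) habs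
  have hn : z.re ^ 2 + z.im ^ 2 ≤ m ^ 2 := by
    have := Complex.sq_norm z
    rw [Complex.normSq_apply] at this
    nlinarith [norm_nonneg z]
  constructor
  · have key : (X - C z) * (X - C (starRingEnd ℂ z))
        = X ^ 2 - C (((2 * z.re : ℝ)) : ℂ) * X + C (((z.re ^ 2 + z.im ^ 2 : ℝ)) : ℂ) := by
      have h1 : z + starRingEnd ℂ z = (((2 * z.re : ℝ)) : ℂ) := by
        rw [Complex.add_conj]; try push_cast
        try ring
      have h2 : z * starRingEnd ℂ z = (((z.re ^ 2 + z.im ^ 2 : ℝ)) : ℂ) := by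
        rw [Complex.mul_conj, Complex.normSq_apply]; try push_cast
        try ring
      calc (X - C z) * (X - C (starRingEnd ℂ z))
          = X ^ 2 - C (z + starRingEnd ℂ z) * X + C (z * starRingEnd ℂ z) := by
            rw [_root_.map_add, _root_.map_mul]; ring
        _ = _ := by rw [h1, h2]
    rw [Matrix.charpoly, Matrix.det_fin_two, key]
    rw [charmatrix_apply_eq, charmatrix_apply_eq,
      charmatrix_apply_ne _ _ _ (by decide : (0 : Fin 2) ≠ 1),
      charmatrix_apply_ne _ _ _ (by decide : (1 : Fin 2) ≠ 0)]
    simp only [Matrix.map_apply]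
    have e0 : (!![z.re, -z.im; z.im, z.re]) 0 0 = z.re := rfl
    have e1 : (!![z.re, -z.im; z.im, z.re]) 0 1 = -z.im := rfl
    have e2 : (!![z.re, -z.im; z.im, z.re]) 1 0 = z.im := rfl
    have e3 : (!![z.re, -z.im; z.im, z.re]) 1 1 = z.re := rfl
    rw [e0, e1, e2, e3]
    simp only [Complex.ofReal_neg, Complex.ofReal_add, Complex.ofReal_mul,
      Complex.ofReal_pow, Complex.ofReal_ofNat, map_neg, _root_.map_add, _root_.map_mul, map_pow, map_ofNat]
    ring
  · intro x y
    have hL : x ⬝ᵥ (!![z.re, -z.im; z.im, z.re]) *ᵥ y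
        = z.re * (x 0 * y 0 + x 1 * y 1) + z.im * (x 1 * y 0 - x 0 * y 1) := by
      simp [dotProduct, mulVec, Fin.sum_univ_two]
      ring
    rw [hL]
    apply abs_le_sqrt_mul hm (dps x)
    have hx : x ⬝ᵥ x = x 0 * x 0 + x 1 * x 1 := by simp [dotProduct, Fin.sum_univ_two]
    have hy : y ⬝ᵥ y = y 0 * y 0 + y 1 * y 1 := by simp [dotProduct, Fin.sum_univ_two]
    rw [hx, hy]
    nlinarith [sq_nonneg (z.re * (x 1 * y 0 - x 0 * y 1) - z.im * (x 0 * y 0 + x 1 * y 1)),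
      mul_nonneg (mul_nonneg (sub_nonneg.2 hn) (sq_nonneg (x 0 * y 0 + x 1 * y 1)))
        (sq_nonneg (x 1 * y 0 - x 0 * y 1)),
      mul_nonneg (sub_nonneg.2 hn) (sq_nonneg (x 1 * y 0 - x 0 * y 1))]

lemma charpoly_similar {n : Type} [Fintype n] [DecidableEq n] (T M : Matrix n n ℝ)
    (hT : T * T = 1) : (T * M * T).charpoly = M.charpoly := by
  set Tc : Matrix n n ℝ[X] := (C : ℝ →+* ℝ[X]).mapMatrix T with hTc
  have h1 : Tc * Tc = 1 := by
    rw [hTc, ← _root_.map_mul, hT, _root_.map_one]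
  have h2 : Commute (Matrix.scalar n (X : ℝ[X])) Tc :=
    scalar_commute _ (fun r' => Commute.all _ _) _
  have hs : Tc * Matrix.scalar n (X : ℝ[X]) * Tc = Matrix.scalar n (X : ℝ[X]) := by
    rw [← h2.eq, mul_assoc, h1, mul_one]
  have hmain : charmatrix (T * M * T) = Tc * charmatrix M * Tc := by
    rw [charmatrix, charmatrix, mul_sub, sub_mul, hs]
    congr 1
    rw [hTc, ← _root_.map_mul, ← _root_.map_mul]
  rw [Matrix.charpoly, Matrix.charpoly, hmain, det_mul, det_mul]
  have hd : Tc.det * Tc.det = 1 := by rw [← det_mul, h1, det_one]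
  calc Tc.det * (charmatrix M).det * Tc.det
      = (charmatrix M).det * (Tc.det * Tc.det) := by ring
    _ = (charmatrix M).det := by rw [hd, mul_one]

lemma householder (nn : ℕ) (hnn : 2 ≤ nn) :
    ∃ T : Matrix (Fin nn) (Fin nn) ℝ,
      T * T = 1 ∧ (∀ p q, T p q = T q p) ∧
      (∀ i : Fin nn, T i ⟨0, by omega⟩ = 1 / Real.sqrt nn) := by
  have hnpos : (0:ℝ) < nn := by positivity
  set c : ℝ := Real.sqrt nn with hcdef
  have hc2 : c ^ 2 = nn := Real.sq_sqrt hnpos.le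
  have hc0 : 0 < c := Real.sqrt_pos.2 hnpos
  have hc1 : 1 < c := by
    have h2 : (2:ℝ) ≤ c ^ 2 := by rw [hc2]; exact_mod_cast hnn
    nlinarith [hc0]
  have hcne : c ≠ 0 := ne_of_gt hc0
  have hc1ne : c - 1 ≠ 0 := sub_ne_zero.2 (ne_of_gt hc1)
  set z : Fin nn := ⟨0, by omega⟩ with hz
  set w : Fin nn → ℝ := fun i => (if i = z then (1:ℝ) else 0) - 1 / c with hw
  have hww : w ⬝ᵥ w = 2 - 2 / c := by
    have key : ∀ i, w i * w i = (if i = z then (1 : ℝ) - 2/c else 0) + 1 / c ^ 2 := by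
      intro i
      by_cases h : i = z <;> simp [hw, h] <;> field_simp <;> ring
    rw [dotProduct]
    rw [Finset.sum_congr rfl fun i _ => key i, Finset.sum_add_distrib,
      Finset.sum_ite_eq' univ z fun _ => (1:ℝ) - 2/c]
    simp only [Finset.mem_univ, if_true, Finset.sum_const, Finset.card_univ,
      Fintype.card_fin, nsmul_eq_mul]
    have : (nn : ℝ) = c ^ 2 := hc2.symm
    rw [this]
    field_simp
    ring
  set γ : ℝ := c / (c - 1) with hγ
  have hγww : γ * (2 - 2 / c) = 2 := by
    rw [hγ]
    field_simp
  set W : Matrix (Fin nn) (Fin nn) ℝ := vecMulVec w w with hWdef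
  have hWW : W * W = (2 - 2 / c) • W := by
    ext i j
    simp only [hWdef, Matrix.mul_apply, vecMulVec_apply, Matrix.smul_apply, smul_eq_mul]
    calc ∑ p, w i * w p * (w p * w j) = ∑ p, (w i * w j) * (w p * w p) := by
          exact Finset.sum_congr rfl fun p _ => by ring
      _ = (w i * w j) * (w ⬝ᵥ w) := by rw [← Finset.mul_sum]; rfl
      _ = (2 - 2/c) * (w i * w j) := by rw [hww]; ring
  refine ⟨1 - γ • W, ?_, ?_, ?_⟩
  · have h4 : W * (γ • W) = (γ * (2 - 2/c)) • W := by
      rw [Matrix.mul_smul, hWW, smul_smul]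
    rw [sub_mul, mul_sub, mul_sub]
    simp only [Matrix.smul_mul, one_mul, mul_one]
    rw [h4, smul_smul, hγww]
    rw [show γ * 2 = γ + γ by ring, add_smul]
    abel
  · intro p q
    by_cases h : p = q
    · subst h; rfl
    · simp only [Matrix.sub_apply, Matrix.smul_apply, smul_eq_mul, Matrix.one_apply,
        if_neg h, if_neg (Ne.symm h), hWdef, vecMulVec_apply]
      ring
  · intro i
    have hwz : w z = 1 - 1/c := by simp [hw]
    by_cases h : i = z
    · subst h
      simp only [Matrix.sub_apply, Matrix.smul_apply, smul_eq_mul, Matrix.one_apply_eq,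
        hWdef, vecMulVec_apply, hwz]
      rw [hγ]
      field_simp
      ring
    · simp only [Matrix.sub_apply, Matrix.smul_apply, smul_eq_mul, Matrix.one_apply,
        if_neg h, hWdef, vecMulVec_apply, hwz]
      have hwi : w i = -(1/c) := by simp [hw, h]
      rw [hwi, hγ]
      field_simp
      ring



lemma goodMat_assemble {m : ℝ} (hm : 0 ≤ m) {d n' n : ℕ} (h : d + n' = n)
    {B1 : Matrix (Fin d) (Fin d) ℝ} {B2 : Matrix (Fin n') (Fin n') ℝ}
    {P1 P2 : Polynomial ℂ} (h1 : GoodMat m B1 P1) (h2 : GoodMat m B2 P2) :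
    ∃ B : Matrix (Fin n) (Fin n) ℝ, GoodMat m B (P1 * P2) :=
  ⟨_, goodMat_reindex (finSumFinEquiv.trans (finCongr h)) (goodMat_fromBlocks hm h1 h2)⟩

lemma exists_goodMat (m : ℝ) (hm : 0 ≤ m) :
    ∀ n : ℕ, ∀ s : Multiset ℂ, Multiset.card s = n →
      s.map (starRingEnd ℂ) = s → (∀ z ∈ s, ‖z‖ ≤ m) →
      ∃ B : Matrix (Fin n) (Fin n) ℝ, GoodMat m B (s.map (fun z => X - C z)).prod := by
  intro n
  induction n using Nat.strong_induction_on with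
  | _ n ih =>
  intro s hcard hconj habs
  rcases Multiset.empty_or_exists_mem s with rfl | ⟨z, hz⟩
  · rw [Multiset.card_zero] at hcard
    subst hcard
    refine ⟨0, ?_, ?_⟩
    · simp only [Multiset.map_zero, Multiset.prod_zero]
      rw [Matrix.charpoly, Matrix.det_isEmpty]
    · intro x y
      have hx : x ⬝ᵥ (0 : Matrix (Fin 0) (Fin 0) ℝ) *ᵥ y = 0 := by
        simp [dotProduct]
      rw [hx]
      simp only [abs_zero]
      positivity
  · have hn1 : 1 ≤ n := hcard ▸ Multiset.card_pos_iff_exists_mem.2 ⟨z, hz⟩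
    by_cases him : z.im = 0
    · -- real root
      have hzz : starRingEnd ℂ z = z := Complex.conj_eq_iff_im.2 him
      set s' := s.erase z with hs'
      have hcard' : Multiset.card s' = n - 1 := by
        rw [hs', Multiset.card_erase_of_mem hz, hcard, Nat.pred_eq_sub_one]
      have hconj' : s'.map (starRingEnd ℂ) = s' := by
        rw [hs', Multiset.map_erase _ (starRingEnd ℂ).injective, hconj, hzz]
      have habs' : ∀ w ∈ s', ‖w‖ ≤ m := fun w hw =>
        habs w (Multiset.mem_of_mem_erase hw)
      obtain ⟨B2, hB2⟩ := ih (n - 1) (by omega) s' hcard' hconj' habs'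
      obtain ⟨B, hB⟩ := goodMat_assemble hm (show 1 + (n - 1) = n by omega)
        (goodMat_one z him (habs z hz)) hB2
      refine ⟨B, ?_, hB.2⟩
      rw [hB.1, ← Multiset.cons_erase hz, Multiset.map_cons, Multiset.prod_cons]
    · -- complex pair
      have hzz : starRingEnd ℂ z ≠ z := fun h => him (Complex.conj_eq_iff_im.1 h)
      have hcz : starRingEnd ℂ z ∈ s := by
        rw [← hconj]; exact Multiset.mem_map_of_mem _ hz
      have hcz' : starRingEnd ℂ z ∈ s.erase z := (Multiset.mem_erase_of_ne hzz).2 hcz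
      set s' := (s.erase z).erase (starRingEnd ℂ z) with hs'
      have hn2 : 2 ≤ n := by
        have h2 : 0 < Multiset.card (s.erase z) :=
          Multiset.card_pos_iff_exists_mem.2 ⟨_, hcz'⟩
        rw [Multiset.card_erase_of_mem hz, hcard, Nat.pred_eq_sub_one] at h2
        omega
      have hcard' : Multiset.card s' = n - 2 := by
        rw [hs', Multiset.card_erase_of_mem hcz', Multiset.card_erase_of_mem hz, hcard,
          Nat.pred_eq_sub_one, Nat.pred_eq_sub_one]
        omega
      have hconj' : s'.map (starRingEnd ℂ) = s' := by
        rw [hs', Multiset.map_erase _ (starRingEnd ℂ).injective,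
          Multiset.map_erase _ (starRingEnd ℂ).injective, hconj, Complex.conj_conj,
          Multiset.erase_comm]
      have habs' : ∀ w ∈ s', ‖w‖ ≤ m := fun w hw =>
        habs w (Multiset.mem_of_mem_erase (Multiset.mem_of_mem_erase hw))
      obtain ⟨B2, hB2⟩ := ih (n - 2) (by omega) s' hcard' hconj' habs'
      obtain ⟨B, hB⟩ := goodMat_assemble hm (show 2 + (n - 2) = n by omega)
        (goodMat_two z (habs z hz)) hB2
      refine ⟨B, ?_, hB.2⟩
      rw [hB.1, ← Multiset.cons_erase hz, ← Multiset.cons_erase hcz',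
        Multiset.map_cons, Multiset.map_cons, Multiset.prod_cons, Multiset.prod_cons,
        mul_assoc]

theorem guo_realizable (k : ℕ) (hk : 0 < k) (l' : Fin k → ℂ)
    (hconj : Multiset.map (starRingEnd ℂ) (Finset.univ.val.map l') = Finset.univ.val.map l')
    (m : ℝ)
    (hm : m = Finset.univ.sup' ⟨⟨0, hk⟩, Finset.mem_univ _⟩ (fun i => ‖l' i‖)) :
    Realizable (Fin.cons (((k : ℝ) * m : ℝ) : ℂ) l') := by
  have habs : ∀ i, ‖l' i‖ ≤ m := fun i =>
    hm ▸ Finset.le_sup' (fun i => ‖l' i‖) (Finset.mem_univ i)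
  have hm0 : 0 ≤ m := le_trans (norm_nonneg _) (habs ⟨0, hk⟩)
  set r : ℝ := (k : ℝ) * m with hr
  have hr0 : 0 ≤ r := by positivity
  set s : Multiset ℂ := Finset.univ.val.map l' with hs
  have hcards : Multiset.card s = k := by simp [hs]
  obtain ⟨B, hBc, hBbil⟩ := exists_goodMat m hm0 k s hcards hconj
    (fun z hz => by
      obtain ⟨i, _, rfl⟩ := Multiset.mem_map.1 hz
      exact habs i)
  set nn : ℕ := k + 1 with hnn
  obtain ⟨T, hTT, hTsym, hTcol⟩ := householder nn (by omega)
  set e : (Fin 1 ⊕ Fin k) ≃ Fin nn := finSumFinEquiv.trans (finCongr (by omega)) with he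
  set R1 : Matrix (Fin 1) (Fin 1) ℝ := Matrix.of fun _ _ => r with hR1
  set F : Matrix (Fin 1 ⊕ Fin k) (Fin 1 ⊕ Fin k) ℝ := fromBlocks R1 0 0 B with hF
  set M : Matrix (Fin nn) (Fin nn) ℝ := reindex e e F with hM
  set A : Matrix (Fin nn) (Fin nn) ℝ := T * M * T with hA
  -- index of the first block
  have hi0 : e (Sum.inl 0) = (⟨0, by omega⟩ : Fin nn) := by
    apply Fin.ext
    rfl
  -- entry formula
  have hrow : ∀ i, ∑ p, T i p * T i p = 1 := by
    intro i
    have h := congrFun (congrFun hTT i) i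
    rw [Matrix.mul_apply, Matrix.one_apply_eq] at h
    rw [← h]
    exact Finset.sum_congr rfl fun p _ => by rw [hTsym p i]
  set t : ℝ := 1 / Real.sqrt nn with ht
  have hnnR : (0:ℝ) < (nn:ℝ) := by positivity
  have ht2 : t * t = 1 / (nn:ℝ) := by
    rw [ht]
    rw [div_mul_div_comm, one_mul, Real.mul_self_sqrt hnnR.le]
  have hxx : ∀ i, (fun p : Fin k => T i (e (Sum.inr p))) ⬝ᵥ (fun p => T i (e (Sum.inr p)))
      = 1 - 1 / (nn:ℝ) := by
    intro i
    have h1 : ∑ a : Fin 1 ⊕ Fin k, T i (e a) * T i (e a) = 1 := by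
      rw [Equiv.sum_comp e (fun p => T i p * T i p)]
      exact hrow i
    rw [Fintype.sum_sum_type] at h1
    simp only [Fin.sum_univ_one] at h1
    rw [hi0, hTcol i] at h1
    have : (1 / Real.sqrt nn) * (1 / Real.sqrt nn) = 1 / (nn:ℝ) := ht ▸ ht2
    rw [this] at h1
    rw [dotProduct]
    linarith
  have hentry : ∀ i j, A i j = r * (t * t)
      + (fun p : Fin k => T i (e (Sum.inr p))) ⬝ᵥ B *ᵥ (fun p => T j (e (Sum.inr p))) := by
    intro i j
    have h1 : A i j = ∑ p, ∑ q, T i p * M p q * T j q := by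
      rw [hA, Matrix.mul_apply]
      simp only [Matrix.mul_apply, Finset.sum_mul]
      rw [Finset.sum_comm]
      refine Finset.sum_congr rfl fun p _ => Finset.sum_congr rfl fun q _ => ?_
      rw [hTsym q j]
    have h2 : A i j = ∑ a : Fin 1 ⊕ Fin k, ∑ b : Fin 1 ⊕ Fin k,
        T i (e a) * F a b * T j (e b) := by
      rw [h1, ← Equiv.sum_comp e (fun p => ∑ q, T i p * M p q * T j q)]
      refine Finset.sum_congr rfl fun a _ => ?_
      rw [← Equiv.sum_comp e (fun q => T i (e a) * M (e a) q * T j q)]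
      refine Finset.sum_congr rfl fun b _ => ?_
      rw [hM]
      simp only [Matrix.reindex_apply, Matrix.submatrix_apply, Equiv.symm_apply_apply]
    rw [h2]
    simp only [Fintype.sum_sum_type, hF, fromBlocks_apply₁₁, fromBlocks_apply₁₂,
      fromBlocks_apply₂₁, fromBlocks_apply₂₂, Fin.sum_univ_one, Matrix.zero_apply, mul_zero,
      zero_mul, Finset.sum_const_zero, add_zero, zero_add]
    rw [hi0, hTcol i, hTcol j]
    congr 1
    · rw [hR1]
      simp only [Matrix.of_apply]
      rw [ht]
      ring
    · simp only [dotProduct, mulVec, Finset.mul_sum]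
      exact Finset.sum_congr rfl fun p _ => Finset.sum_congr rfl fun q _ => by ring
  have hnonneg : ∀ i j, 0 ≤ A i j := by
    intro i j
    have hb := hBbil (fun p => T i (e (Sum.inr p))) (fun p => T j (e (Sum.inr p)))
    rw [hxx i, hxx j] at hb
    have h1nn : 1 / (nn:ℝ) ≤ 1 := by
      rw [div_le_one hnnR]
      exact_mod_cast Nat.one_le_iff_ne_zero.2 (by omega)
    have hu : (0:ℝ) ≤ 1 - 1/(nn:ℝ) := by linarith
    have hsq : m * Real.sqrt (1 - 1/(nn:ℝ)) * Real.sqrt (1 - 1/(nn:ℝ)) = m * (1 - 1/(nn:ℝ)) := by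
      rw [mul_assoc, Real.mul_self_sqrt hu]
    rw [hsq] at hb
    have key : m * (1 - 1/(nn:ℝ)) = r * (t*t) := by
      rw [ht2, hr, hnn]
      have : ((k:ℝ) + 1) ≠ 0 := by positivity
      push_cast
      field_simp
      ring
    rw [hentry i j]
    have hd := (abs_le.1 hb).1
    rw [key] at hb
    nlinarith [(abs_le.1 hb).1]
  -- characteristic polynomial
  have him : ((r:ℝ):ℂ).im = 0 := Complex.ofReal_im r
  have habs' : ‖((r:ℝ):ℂ)‖ ≤ r := by
    rw [Complex.norm_real, Real.norm_eq_abs, abs_of_nonneg hr0]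
  have hR1c : ((R1.map Complex.ofReal).charpoly : Polynomial ℂ) = X - C ((r:ℝ):ℂ) := by
    have h := (goodMat_one (m := r) ((r:ℝ):ℂ) him habs').1
    have heq : (Matrix.of fun _ _ : Fin 1 => (((r:ℝ):ℂ)).re) = R1 := by
      ext i j
      simp [hR1]
    rw [heq] at h
    exact h
  have hchar : (A.map Complex.ofReal).charpoly
      = ∏ i : Fin nn, (X - C ((Fin.cons ((r:ℝ):ℂ) l') i)) := by
    have hmapA : A.map Complex.ofReal = A.map (Complex.ofRealHom : ℝ →+* ℂ) := rfl
    have hMmap : M.map (Complex.ofRealHom : ℝ →+* ℂ)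
        = reindex e e (F.map (Complex.ofRealHom : ℝ →+* ℂ)) := rfl
    have hFmap : F.map (Complex.ofRealHom : ℝ →+* ℂ)
        = fromBlocks (R1.map Complex.ofReal) 0 0 (B.map Complex.ofReal) := by
      rw [hF, fromBlocks_map]
      congr 1 <;> try rfl
      all_goals ext i j; simp
    calc (A.map Complex.ofReal).charpoly
        = A.charpoly.map (Complex.ofRealHom : ℝ →+* ℂ) := by
          rw [hmapA, Matrix.charpoly_map]
      _ = M.charpoly.map (Complex.ofRealHom : ℝ →+* ℂ) := by
          rw [hA, charpoly_similar T M hTT]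
      _ = (M.map (Complex.ofRealHom : ℝ →+* ℂ)).charpoly := (Matrix.charpoly_map M _).symm
      _ = (F.map (Complex.ofRealHom : ℝ →+* ℂ)).charpoly := by
          rw [hMmap, Matrix.charpoly_reindex]
      _ = (R1.map Complex.ofReal).charpoly * (B.map Complex.ofReal).charpoly := by
          rw [hFmap, Matrix.charpoly_fromBlocks_zero₂₁]
      _ = (X - C ((r:ℝ):ℂ)) * ∏ i : Fin k, (X - C (l' i)) := by
          rw [hR1c, hBc, hs, Multiset.map_map]
          rfl
      _ = ∏ i : Fin nn, (X - C ((Fin.cons ((r:ℝ):ℂ) l') i)) := by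
          show _ = ∏ i : Fin (k+1), (X - C ((Fin.cons ((r:ℝ):ℂ) l' : Fin (k+1) → ℂ) i))
          rw [Fin.prod_univ_succ]
          simp
  exact ⟨A, hnonneg, hchar⟩

lemma realizable_lower_bound (k : ℕ) (l' : Fin k → ℂ) (x : ℝ)
    (h : Realizable (Fin.cons ((x : ℂ)) l')) : -(∑ i, (l' i).re) ≤ x := by
  obtain ⟨A, hAn, hAc⟩ := h
  have htr : (A.map Complex.ofReal).trace
      = -((A.map Complex.ofReal).charpoly.coeff (Fintype.card (Fin (k+1)) - 1)) :=
    Matrix.trace_eq_neg_charpoly_coeff _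
  have hcoeff := prod_X_sub_C_coeff_card_pred (univ : Finset (Fin (k+1)))
      (fun i => Fin.cons ((x:ℂ)) l' i) (by simp)
  simp only [Finset.card_univ, Fintype.card_fin] at hcoeff
  rw [hAc] at htr
  simp only [Fintype.card_fin] at htr
  rw [hcoeff, neg_neg] at htr
  have htr2 : (A.map Complex.ofReal).trace = ((A.trace : ℝ) : ℂ) := by
    simp only [Matrix.trace, Matrix.diag, Matrix.map_apply]
    push_cast
    rfl
  have hsum : ∑ i : Fin (k+1), Fin.cons ((x:ℂ)) l' i = (x : ℂ) + ∑ i : Fin k, l' i := by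
    rw [Fin.sum_univ_succ]
    simp
  rw [htr2, hsum] at htr
  have hre := congrArg Complex.re htr
  simp only [Complex.ofReal_re, Complex.add_re] at hre
  have hresum : (∑ i : Fin k, l' i).re = ∑ i : Fin k, (l' i).re := by
    rw [Complex.re_sum]
  rw [hresum] at hre
  have htrace_nonneg : 0 ≤ A.trace := Finset.sum_nonneg fun i _ => hAn i i
  linarith [hre ▸ htrace_nonneg]

/-- **Improved Guo bound.** Let `Λ' = (λ_2, …, λ_n)` (here a self-conjugate list of
`k = n - 1 ≥ 1` complex numbers) and `m = max_j |λ_j|`. Then `((n-1)·m, λ_2, …, λ_n)`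
is realizable, and consequently the Guo index of `Λ'` (the infimum of the `λ` making
`(λ, λ_2, …, λ_n)` realizable) is at most `(n-1)·m`. -/
theorem guo_bound_improved (k : ℕ) (hk : 0 < k) (l' : Fin k → ℂ)
    (hconj : Multiset.map (starRingEnd ℂ) (Finset.univ.val.map l') = Finset.univ.val.map l')
    (m : ℝ)
    (hm : m = Finset.univ.sup' ⟨⟨0, hk⟩, Finset.mem_univ _⟩ (fun i => ‖l' i‖)) :
    Realizable (Fin.cons (((k : ℝ) * m : ℝ) : ℂ) l') ∧
    sInf {x : ℝ | Realizable (Fin.cons ((x : ℂ)) l')} ≤ (k : ℝ) * m := by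
  have h1 : Realizable (Fin.cons (((k : ℝ) * m : ℝ) : ℂ) l') :=
    guo_realizable k hk l' hconj m hm
  exact ⟨h1, csInf_le ⟨-(∑ i, (l' i).re),
    fun x hx => realizable_lower_bound k l' x hx⟩ h1⟩
end

section
/- (Suleimanova's theorem) Let Λ = (λ_1, λ_2, …, λ_n) be a list of real numbers satisfying λ_1 + λ_2 + … + λ_n ≥ 0 and λ_k < 0 for k = 2, 3, …, n. Then Λ is realizable. -/
open Polynomial Matrix Finset

/-- A list of real numbers is realizable if it is the spectrum (counted with
algebraic multiplicity) of an entrywise nonnegative real matrix. -/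
def RealRealizable {n : ℕ} (l : Fin n → ℝ) : Prop :=
  ∃ A : Matrix (Fin n) (Fin n) ℝ, (∀ i j, 0 ≤ A i j) ∧
    A.charpoly = ∏ i, (X - C (l i))

/-- Coefficient facts about `∏ (X + C μᵢ)` with `μᵢ ≥ 0`: nonneg coefficients,
monic of degree `card`, and the ratio bound `coeff k ≤ (∑ μ) * coeff (k+1)`. -/
lemma sul_aux {ι : Type*} (s : Finset ι) (f : ι → ℝ) (h : ∀ i ∈ s, 0 ≤ f i) :
    (∀ k, 0 ≤ (∏ i ∈ s, (X + C (f i))).coeff k) ∧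
    (∏ i ∈ s, (X + C (f i))).coeff s.card = 1 ∧
    (∀ k, s.card < k → (∏ i ∈ s, (X + C (f i))).coeff k = 0) ∧
    (∀ k < s.card, (∏ i ∈ s, (X + C (f i))).coeff k
      ≤ (∑ i ∈ s, f i) * (∏ i ∈ s, (X + C (f i))).coeff (k + 1)) := by
  induction s using Finset.cons_induction with
  | empty =>
    simp only [Finset.prod_empty, Finset.card_empty, Finset.sum_empty, coeff_one, zero_mul]
    refine ⟨fun k => by split <;> norm_num, by norm_num, fun k hk => by
      rw [if_neg (by omega)], fun k hk => by omega⟩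
  | cons a s ha ih =>
    obtain ⟨ih1, ih2, ih3, ih4⟩ := ih (fun i hi => h i (Finset.mem_cons_of_mem hi))
    have hμ : 0 ≤ f a := h a (Finset.mem_cons_self a s)
    have hS : 0 ≤ ∑ i ∈ s, f i := Finset.sum_nonneg (fun i hi => h i (Finset.mem_cons_of_mem hi))
    set q := ∏ i ∈ s, (X + C (f i)) with hq
    rw [Finset.prod_cons, Finset.sum_cons, Finset.card_cons]
    have hc : ∀ k, ((X + C (f a)) * q).coeff (k + 1) = q.coeff k + f a * q.coeff (k + 1) := by
      intro k
      rw [add_mul, coeff_add, coeff_X_mul, coeff_C_mul]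
    have hc0 : ((X + C (f a)) * q).coeff 0 = f a * q.coeff 0 := by
      rw [add_mul, coeff_add, mul_coeff_zero, coeff_X_zero, zero_mul, zero_add, coeff_C_mul]
    refine ⟨?_, ?_, ?_, ?_⟩
    · intro k
      cases k with
      | zero => rw [hc0]; exact mul_nonneg hμ (ih1 0)
      | succ k => rw [hc]; exact add_nonneg (ih1 k) (mul_nonneg hμ (ih1 (k + 1)))
    · rw [hc, ih2, ih3 _ (Nat.lt_succ_self _), mul_zero, add_zero]
    · intro k hk
      cases k with
      | zero => omega
      | succ k =>
        rw [hc, ih3 k (by omega), ih3 (k + 1) (by omega), mul_zero, add_zero]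
    · intro k hk
      cases k with
      | zero =>
        rw [hc0, hc]
        have : f a * q.coeff 0 ≤ (∑ i ∈ s, f i + f a) * q.coeff 0 := by
          apply mul_le_mul_of_nonneg_right _ (ih1 0)
          linarith
        calc f a * q.coeff 0 ≤ (∑ i ∈ s, f i + f a) * q.coeff 0 := this
          _ ≤ (f a + ∑ i ∈ s, f i) * (q.coeff 0 + f a * q.coeff 1) := by
              have h1 : 0 ≤ (f a + ∑ i ∈ s, f i) * (f a * q.coeff 1) :=
                mul_nonneg (by linarith) (mul_nonneg hμ (ih1 1))
              nlinarith [ih1 0]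
      | succ k =>
        rw [hc, hc]
        have hk' : k < s.card := by
          rcases Nat.lt_or_ge k s.card with h' | h'
          · exact h'
          · -- then k = s.card, in which case coeff (k) = 1 case still fine? need k < card
            -- k + 1 < card + 1 so k < card
            omega
        have h1 : q.coeff k ≤ (∑ i ∈ s, f i) * q.coeff (k + 1) := ih4 k hk'
        have h2 : 0 ≤ q.coeff (k + 1) := ih1 (k + 1)
        have h3 : 0 ≤ q.coeff (k + 2) := ih1 (k + 2)
        nlinarith [mul_nonneg hμ (mul_nonneg hμ h3), mul_nonneg hS (mul_nonneg hμ h3),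
          mul_nonneg hμ h2]
/-- The non-leading coefficients of `∏ (X - C (l i))` are nonpositive under the
Suleimanova hypotheses. -/
lemma sul_coeff_nonpos (m : ℕ) (l : Fin (m + 1) → ℝ)
    (hsum : 0 ≤ ∑ i, l i)
    (hneg : ∀ i : Fin (m + 1), 0 < (i : ℕ) → l i < 0) :
    ∀ k < m + 1, (∏ i, (X - C (l i))).coeff k ≤ 0 := by
  classical
  set s : Finset (Fin (m + 1)) := Finset.univ.erase 0 with hs
  have hcard : s.card = m := by
    rw [hs, Finset.card_erase_of_mem (Finset.mem_univ _), Finset.card_univ, Fintype.card_fin]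
    omega
  have hf : ∀ i ∈ s, 0 ≤ -l i := by
    intro i hi
    have : (i : ℕ) ≠ 0 := by
      exact fun h => (Finset.mem_erase.mp hi).1 (Fin.ext (by simp [h]))
    have := hneg i (Nat.pos_of_ne_zero this)
    linarith
  obtain ⟨h1, h2, h3, h4⟩ := sul_aux s (fun i => -l i) hf
  set q := ∏ i ∈ s, (X + C (-l i)) with hqdef
  have hsplit : (∏ i, (X - C (l i))) = (X - C (l 0)) * q := by
    rw [hqdef]
    have : ∀ i : Fin (m + 1), X - C (l i) = X + C (-l i) := by
      intro i; rw [map_neg, sub_eq_add_neg]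
    simp_rw [this]
    exact (Finset.mul_prod_erase Finset.univ _ (Finset.mem_univ 0)).symm
  have hsum' : (∑ i ∈ s, -l i) ≤ l 0 := by
    have := Finset.add_sum_erase Finset.univ l (Finset.mem_univ (0 : Fin (m + 1)))
    rw [Finset.sum_neg_distrib]
    linarith
  have hS0 : 0 ≤ ∑ i ∈ s, -l i := Finset.sum_nonneg hf
  have hl0 : 0 ≤ l 0 := le_trans hS0 hsum'
  intro k hk
  rw [hsplit, sub_mul]
  cases k with
  | zero =>
    rw [coeff_sub, mul_coeff_zero, coeff_X_zero, zero_mul, coeff_C_mul, zero_sub, neg_nonpos]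
    exact mul_nonneg hl0 (h1 0)
  | succ k =>
    rw [coeff_sub, coeff_X_mul, coeff_C_mul]
    have hk' : k < s.card := by omega
    have := h4 k hk'
    have hq1 : 0 ≤ q.coeff (k + 1) := h1 (k + 1)
    nlinarith
/-- **Suleimanova's theorem.** If `λ_1 + λ_2 + ⋯ + λ_n ≥ 0` and `λ_k < 0` for
`k = 2, …, n`, then `(λ_1, …, λ_n)` is realizable. -/
theorem suleimanova (n : ℕ) (l : Fin n → ℝ)
    (hsum : 0 ≤ ∑ i, l i)
    (hneg : ∀ i : Fin n, 0 < (i : ℕ) → l i < 0) :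
    RealRealizable l := by
  classical
  cases n with
  | zero =>
    refine ⟨0, fun i => i.elim0, ?_⟩
    rw [Matrix.charpoly]
    simp [Matrix.det_isEmpty]
  | succ m =>
    set p : ℝ[X] := ∏ i, (X - C (l i)) with hpdef
    have hp : p.Monic := monic_prod_of_monic _ _ fun i _ => monic_X_sub_C _
    have hdeg : p.natDegree = m + 1 := by
      rw [hpdef, natDegree_prod _ _ (fun i _ => X_sub_C_ne_zero _)]
      simp [natDegree_X_sub_C]
    have hcoeff : ∀ k < m + 1, p.coeff k ≤ 0 := sul_coeff_nonpos m l hsum hneg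
    have hp0 : p ≠ 0 := hp.ne_zero
    set pb := AdjoinRoot.powerBasis' hp with hpb
    set M : Matrix (Fin p.natDegree) (Fin p.natDegree) ℝ :=
      Algebra.leftMulMatrix pb.basis (AdjoinRoot.root p) with hM
    have hMentry : ∀ i j, 0 ≤ M i j := by
      intro i j
      have hj : (j : ℕ) < m + 1 := hdeg ▸ j.isLt
      have : M i j = ((X ^ ((j : ℕ) + 1)) %ₘ p).coeff i := by
        rw [hM]; refine (Algebra.leftMulMatrix_eq_repr_mul pb.basis (AdjoinRoot.root p) i j).trans ?_
        have hb : pb.basis j = AdjoinRoot.root p ^ (j : ℕ) := by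
          have := pb.basis_eq_pow j
          simp only [hpb] at this ⊢; exact this
        rw [hb]
        have : (AdjoinRoot.root p) * (AdjoinRoot.root p) ^ (j : ℕ)
            = AdjoinRoot.mk p (X ^ ((j : ℕ) + 1)) := by
          rw [map_pow, AdjoinRoot.mk_X, pow_succ']
        rw [this]
        show (AdjoinRoot.powerBasisAux' hp).repr _ i = _
        rw [AdjoinRoot.powerBasisAux'_repr_apply_to_fun, AdjoinRoot.modByMonicHom_mk]
      rw [this]
      rcases Nat.lt_or_ge ((j : ℕ) + 1) (m + 1) with hlt | hge
      · have hmod : (X ^ ((j : ℕ) + 1) : ℝ[X]) %ₘ p = X ^ ((j : ℕ) + 1) := by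
          rw [Polynomial.modByMonic_eq_self_iff hp, degree_X_pow,
            Polynomial.degree_eq_natDegree hp0]
          exact_mod_cast show ((j : ℕ) + 1) < p.natDegree by omega
        rw [hmod, coeff_X_pow]
        split <;> norm_num
      · have hjn : (j : ℕ) + 1 = m + 1 := by omega
        have hmod : (X ^ ((j : ℕ) + 1) : ℝ[X]) %ₘ p = X ^ ((j : ℕ) + 1) - p := by
          have h1 : (X ^ ((j : ℕ) + 1) : ℝ[X]) = (X ^ ((j : ℕ) + 1) - p) + p := by ring
          have h2 : p %ₘ p = 0 := by
            rw [Polynomial.modByMonic_eq_zero_iff_dvd hp]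
          have h3 : ((X ^ ((j : ℕ) + 1) : ℝ[X]) - p + p) %ₘ p
              = ((X ^ ((j : ℕ) + 1) : ℝ[X]) - p) %ₘ p + p %ₘ p :=
            Polynomial.add_modByMonic _ _
          rw [← h1, h2, add_zero] at h3
          rw [h3, Polynomial.modByMonic_eq_self_iff hp]
          have hd : degree ((X : ℝ[X]) ^ ((j : ℕ) + 1) - p) < degree ((X : ℝ[X]) ^ ((j : ℕ) + 1)) := by
            apply Polynomial.degree_sub_lt
            · rw [degree_X_pow, Polynomial.degree_eq_natDegree hp0]
              exact_mod_cast (by omega : (j : ℕ) + 1 = p.natDegree)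
            · exact pow_ne_zero _ X_ne_zero
            · rw [Polynomial.leadingCoeff_X_pow, hp.leadingCoeff]
          calc degree ((X : ℝ[X]) ^ ((j : ℕ) + 1) - p) < degree ((X : ℝ[X]) ^ ((j : ℕ) + 1)) := hd
            _ = degree p := by
                rw [degree_X_pow, Polynomial.degree_eq_natDegree hp0]
                exact_mod_cast (by omega : (j : ℕ) + 1 = p.natDegree)
        rw [hmod, coeff_sub, coeff_X_pow]
        have hine : (i : ℕ) ≠ (j : ℕ) + 1 := by
          have : (i : ℕ) < m + 1 := hdeg ▸ i.isLt
          omega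
        rw [if_neg hine, zero_sub, neg_nonneg]
        exact hcoeff i (hdeg ▸ i.isLt)
    set e : Fin p.natDegree ≃ Fin (m + 1) := finCongr hdeg with he
    refine ⟨Matrix.reindex e e M, ?_, ?_⟩
    · intro i j
      rw [Matrix.reindex_apply, Matrix.submatrix_apply]
      exact hMentry _ _
    · rw [Matrix.charpoly_reindex, hM]
      have hgen : AdjoinRoot.root p = pb.gen := by simp [hpb]
      rw [hgen]; refine (charpoly_leftMulMatrix pb).trans ?_
      rw [← hgen, AdjoinRoot.minpoly_root hp0, hp.leadingCoeff,
        inv_one, Polynomial.C_1, mul_one]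
end
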